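/- arXiv:2107.13288 — 6 statements merged into one kernel-verified Lean document; each statement's English description precedes it below -/
import Mathlib

section
/- Let G be a group, V a real vector space, and ρ : G → GL(V) a group homomorphism (write g·v for ρ(g)v). Let C ⊆ V satisfy 0 ∈ C, C + C ⊆ C, and g·C = C for all g ∈ G, and fix h ∈ V. Then S(C,h) := {g ∈ G : h − g·h ∈ C} is a submonoid of G. If, in addition, τ : G → G is an involutive group automorphism and τ_V : V → V is a linear involution satisfying τ_V(g·v) = τ(g)·τ_V(v) for all g ∈ G, v ∈ V, together with τ_V(h) = h and τ_V(C) = −C, then g ∈ S(C,h) implies g^♯ := τ(g)⁻¹ ∈ S(C,h). -/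
/-- Let `ρ : G → GL(V)` be a homomorphism, `C ⊆ V` with `0 ∈ C`, `C + C ⊆ C`,
`g·C = C` for all `g`, and `h ∈ V`. Then `S(C,h) = {g : h − g·h ∈ C}` is a
submonoid of `G`; and if `τ` is an involutive automorphism of `G`, `τ_V` a linear
involution of `V` with `τ_V(g·v) = τ(g)·τ_V(v)`, `τ_V h = h` and `τ_V(C) = −C`,
then `g ∈ S(C,h)` implies `g^♯ = τ(g)⁻¹ ∈ S(C,h)`. -/
theorem stmt1 {G V : Type*} [Group G] [AddCommGroup V] [Module ℝ V]
    (ρ : G →* (V ≃ₗ[ℝ] V)) (C : Set V) (h : V)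
    (hC0 : (0 : V) ∈ C) (hCadd : ∀ a ∈ C, ∀ b ∈ C, a + b ∈ C)
    (hCinv : ∀ g : G, (⇑(ρ g)) '' C = C) :
    (∃ S : Submonoid G, (S : Set G) = {g : G | h - ρ g h ∈ C}) ∧
    ∀ τ : G →* G, (∀ g, τ (τ g) = g) →
      ∀ τV : V →ₗ[ℝ] V, (∀ v, τV (τV v) = v) →
        (∀ (g : G) (v : V), τV (ρ g v) = ρ (τ g) (τV v)) →
        τV h = h → (⇑τV) '' C = -C →
        ∀ g : G, h - ρ g h ∈ C → h - ρ ((τ g)⁻¹) h ∈ C := by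
  have key : ∀ (g : G) (v : V), v ∈ C → ρ g v ∈ C := by
    intro g v hv
    rw [← hCinv g]; exact ⟨v, hv, rfl⟩
  constructor
  · refine ⟨⟨⟨{g : G | h - ρ g h ∈ C}, ?_⟩, by simpa using hC0⟩, rfl⟩
    intro a b ha hb
    have : h - ρ (a * b) h = (h - ρ a h) + ρ a (h - ρ b h) := by
      simp [map_sub, MonoidHom.map_mul ρ a b]
    show h - ρ (a * b) h ∈ C
    rw [this]
    exact hCadd _ ha _ (key a _ hb)
  · intro τ hτ τV hτV hcomp hτh hτC g hg
    have h1 : τV (h - ρ g h) ∈ ⇑τV '' C := ⟨_, hg, rfl⟩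
    rw [hτC] at h1
    have h2 : ρ (τ g) h - h ∈ C := by
      have : τV (h - ρ g h) = h - ρ (τ g) h := by
        rw [map_sub, hτh, hcomp, hτh]
      rw [this] at h1
      simpa using h1
    have h3 := key ((τ g)⁻¹) _ h2
    have : ρ ((τ g)⁻¹) (ρ (τ g) h - h) = h - ρ ((τ g)⁻¹) h := by
      rw [map_sub]
      congr 1
      have h4 : ρ ((τ g)⁻¹) (ρ (τ g) h) = ρ ((τ g)⁻¹ * τ g) h := by
        rw [map_mul]; rfl
      rw [h4]; simp
    rwa [this] at h3
end

section
/- Let G be a group acting on a set X, let H ≤ G be a subgroup, let h ∈ X with stabilizer G^h = {g ∈ G : g·h = h}, and let S ⊆ X satisfy k·S = S for all k ∈ H. Consider the left coset space G/H with its left G-action and set F = {gH ∈ G/H : g⁻¹·h ∈ S} (this condition is independent of the chosen representative g of the coset gH). Then the assignment sending the G^h-orbit of gH ∈ F to the H-orbit of g⁻¹·h is a well-defined bijection from the set of G^h-orbits in F onto the set of H-orbits in (G·h) ∩ S. -/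
open Pointwise

/-- Let `G` act on `X`, `H ≤ G`, `h ∈ X` with stabilizer `G^h`, and `S ⊆ X` with
`k·S = S` for all `k ∈ H`. On `F = {gH ∈ G/H : g⁻¹·h ∈ S}` (a condition independent
of the representative), the assignment `G^h·(gH) ↦ H·(g⁻¹·h)` is a well-defined
bijection from `F/G^h` onto `((G·h) ∩ S)/H`. -/
theorem stmt3 {G X : Type*} [Group G] [MulAction G X] (H : Subgroup G) (h : X)
    (S : Set X) (hS : ∀ k ∈ H, k • S = S) :
    (∀ g g' : G, (QuotientGroup.mk g : G ⧸ H) = QuotientGroup.mk g' →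
      (g⁻¹ • h ∈ S ↔ g'⁻¹ • h ∈ S)) ∧
    (∀ g₁ g₂ : G, g₁⁻¹ • h ∈ S → g₂⁻¹ • h ∈ S →
      ((∃ k ∈ MulAction.stabilizer G h,
          k • (QuotientGroup.mk g₁ : G ⧸ H) = QuotientGroup.mk g₂) ↔
        ∃ a ∈ H, a • (g₁⁻¹ • h) = g₂⁻¹ • h)) ∧
    (∀ y ∈ MulAction.orbit G h ∩ S, ∃ g : G, g⁻¹ • h ∈ S ∧ g⁻¹ • h = y) := by
  refine ⟨?_, ?_, ?_⟩
  · intro g g' hgg'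
    rw [QuotientGroup.eq] at hgg'
    have key : ∀ k ∈ H, ∀ x ∈ S, k • x ∈ S := by
      intro k hk x hx
      rw [← hS k hk]; exact ⟨x, hx, rfl⟩
    constructor
    · intro hg
      have := key _ (H.inv_mem hgg') _ hg
      simpa [mul_smul, mul_inv_rev] using this
    · intro hg'
      have := key _ hgg' _ hg'
      rw [smul_smul] at this
      simpa [mul_inv_rev, mul_assoc, mul_smul] using this
  · intro g₁ g₂ _ _
    constructor
    · rintro ⟨k, hk, hkq⟩
      rw [MulAction.mem_stabilizer_iff] at hk
      have : (QuotientGroup.mk (k * g₁) : G ⧸ H) = QuotientGroup.mk g₂ := by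
        simpa [MulAction.Quotient.smul_mk] using hkq
      rw [QuotientGroup.eq] at this
      refine ⟨(g₂⁻¹ * k * g₁), ?_, ?_⟩
      · have := H.inv_mem this
        simpa [mul_inv_rev, mul_assoc] using this
      · simp [mul_smul, hk]
    · rintro ⟨a, ha, ha'⟩
      refine ⟨g₂ * a * g₁⁻¹, ?_, ?_⟩
      · show (g₂ * a * g₁⁻¹) • h = h
        rw [mul_smul, mul_smul, ha', ← mul_smul, mul_inv_cancel, one_smul]
      · have : (QuotientGroup.mk (g₂ * a * g₁⁻¹ * g₁) : G ⧸ H) = QuotientGroup.mk g₂ := by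
          rw [QuotientGroup.eq]
          simpa [mul_assoc] using ha
        simpa [MulAction.Quotient.smul_mk, mul_assoc] using this
  · rintro y ⟨⟨g, rfl⟩, hy⟩
    exact ⟨g⁻¹, by simpa using hy, by simp⟩
end

section
/- For z = x + iy ∈ ℂ^{d+1} with x, y ∈ V satisfying β(x,x) − β(y,y) = 1, β(x,y) = 0 and β(y,y) > 0, one has β(x,x) = 1 + β(y,y) > 1; and the map Γ(z) := β(x,x)^{−1/2}·(x, y) is a bijection from the set {z = x + iy : β(x,x) − β(y,y) = 1, β(x,y) = 0, β(y,y) > 0} onto the set {(u,v) ∈ V × V : β(u,u) = 1, β(u,v) = 0, 0 < β(v,v) < 1}. -/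
noncomputable section

/-- `V = ℝ^{d+1}`. -/
abbrev Vd (d : ℕ) : Type := Fin (d + 1) → ℝ

/-- The symmetric bilinear form `β(x,y) = x₀y₀ + x₁y₁ − x₂y₂ − ⋯ − x_dy_d`. -/
def betaB (d : ℕ) (x y : Vd d) : ℝ :=
  ∑ j : Fin (d + 1), (if (j : ℕ) ≤ 1 then (1 : ℝ) else -1) * x j * y j

abbrev Mat (d : ℕ) : Type := Matrix (Fin (d + 1)) (Fin (d + 1)) ℝ

/-- The group `O(β)` of linear automorphisms of `V` preserving `β`,
as a set of matrices (with the subspace topology of `End(V)`). -/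
def Obeta (d : ℕ) : Set (Mat d) :=
  {g | IsUnit g ∧ ∀ x y : Vd d, betaB d (g.mulVec x) (g.mulVec y) = betaB d x y}

/-- `G = SO_{2,d-1}(ℝ)_e`, the identity component of `O(β)`. -/
def Gset (d : ℕ) : Set (Mat d) := connectedComponentIn (Obeta d) 1

/-- Anti-de Sitter space `AdS^d = {x : β(x,x) = 1}`. -/
def AdS (d : ℕ) : Set (Vd d) := {x | betaB d x x = 1}

/-- Standard basis vector `e_i`. -/
def evec (d : ℕ) (i : Fin (d + 1)) : Vd d := fun j => if j = i then 1 else 0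

/-- The positive causal cone `V₊(e₀)` at the base point. -/
def Vplus (d : ℕ) : Set (Vd d) :=
  {v | betaB d (evec d 0) v = 0 ∧ 0 < betaB d v v ∧ 0 < betaB d v (evec d 1)}

/-- A pair `(x,y)` with `x ∈ M`, `β(x,y) = 0` is positive if some `g ∈ G`
moves it into the positive cone at the base point. -/
def posPair (d : ℕ) (x y : Vd d) : Prop :=
  ∃ g ∈ Gset d, g.mulVec x = evec d 0 ∧ g.mulVec y ∈ Vplus d

/-- Representing `z = x + iy ∈ V_ℂ` as the pair `(x,y)`: the set
`M_ℂ ∩ (V + i V_{>0})`. -/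
def TubeSrc (d : ℕ) : Set (Vd d × Vd d) :=
  {p | betaB d p.1 p.1 - betaB d p.2 p.2 = 1 ∧ betaB d p.1 p.2 = 0 ∧ 0 < betaB d p.2 p.2}

/-- The positive tube domain `𝒯_M⁺`: those `z = x + iy` in `M_ℂ ∩ 𝒯_V` for which
`Γ(z) = β(x,x)^{-1/2}(x,y)` is a positive pair. -/
def TubePlus (d : ℕ) : Set (Vd d × Vd d) :=
  {p | p ∈ TubeSrc d ∧
    posPair d ((Real.sqrt (betaB d p.1 p.1))⁻¹ • p.1) ((Real.sqrt (betaB d p.1 p.1))⁻¹ • p.2)}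

/-- The involution `τ_h = diag(1,−1,−1,1,…,1)`. -/
def tauh (d : ℕ) : Mat d :=
  Matrix.diagonal fun j : Fin (d + 1) => if (j : ℕ) = 1 ∨ (j : ℕ) = 2 then (-1 : ℝ) else 1

/-- The Euler element `h` with `h e₁ = e₂`, `h e₂ = e₁`, `h e_j = 0` otherwise. -/
def hmat (d : ℕ) : Mat d :=
  Matrix.of fun i j : Fin (d + 1) =>
    if ((i : ℕ) = 1 ∧ (j : ℕ) = 2) ∨ ((i : ℕ) = 2 ∧ (j : ℕ) = 1) then (1 : ℝ) else 0

/-- The centralizer `G^h = {g ∈ G : gh = hg}`. -/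
def Gh (d : ℕ) : Set (Mat d) := {g ∈ Gset d | g * hmat d = hmat d * g}

/-- The positivity domain `W_M⁺(h) = {x ∈ M : (x, hx) is positive}`. -/
def WplusDom (d : ℕ) : Set (Vd d) := {x ∈ AdS d | posPair d x ((hmat d).mulVec x)}

/-- `α_{it}(x) = (x₀, cos t·x₁ + i sin t·x₂, cos t·x₂ + i sin t·x₁, x₃, …, x_d)`,
written as a pair (real part, imaginary part). -/
def alphaIt (d : ℕ) (t : ℝ) (x : Vd d) : Vd d × Vd d :=
  (fun j => if (j : ℕ) = 1 ∨ (j : ℕ) = 2 then Real.cos t * x j else x j,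
   fun j => if (j : ℕ) = 1 then Real.sin t * x 2
            else if (j : ℕ) = 2 then Real.sin t * x 1 else 0)

/-- The KMS wedge domain `W_M^{KMS}(h)`. -/
def KMSdom (d : ℕ) : Set (Vd d) :=
  {x ∈ AdS d | ∀ t : ℝ, 0 < t → t < Real.pi → alphaIt d t x ∈ TubePlus d}

/-- `Γ(x + iy) = β(x,x)^{−1/2}·(x,y)`. -/
def GammaMap (d : ℕ) (p : Vd d × Vd d) : Vd d × Vd d :=
  ((Real.sqrt (betaB d p.1 p.1))⁻¹ • p.1, (Real.sqrt (betaB d p.1 p.1))⁻¹ • p.2)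


lemma betaB_smul_smul (d : ℕ) (s t : ℝ) (x y : Vd d) :
    betaB d (s • x) (t • y) = s * t * betaB d x y := by
  simp only [betaB, Finset.mul_sum, Pi.smul_apply, smul_eq_mul]
  exact Finset.sum_congr rfl fun j _ => by ring

lemma betaB_gamma (d : ℕ) {a : ℝ} (ha : 0 < a) (x y : Vd d) :
    betaB d ((Real.sqrt a)⁻¹ • x) ((Real.sqrt a)⁻¹ • y) = a⁻¹ * betaB d x y := by
  rw [betaB_smul_smul, ← mul_inv, Real.mul_self_sqrt ha.le]

/-- For `z = x + iy` with `β(x,x) − β(y,y) = 1`, `β(x,y) = 0`, `β(y,y) > 0`,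
one has `β(x,x) = 1 + β(y,y) > 1`, and `Γ` is a bijection from
`M_ℂ ∩ 𝒯_V` onto `{(u,v) : β(u,u) = 1, β(u,v) = 0, 0 < β(v,v) < 1}`. -/
theorem stmt8 (d : ℕ) (hd : 2 ≤ d) :
    (∀ p ∈ TubeSrc d, betaB d p.1 p.1 = 1 + betaB d p.2 p.2 ∧ 1 < betaB d p.1 p.1) ∧
    Set.BijOn (GammaMap d) (TubeSrc d)
      {p : Vd d × Vd d | betaB d p.1 p.1 = 1 ∧ betaB d p.1 p.2 = 0 ∧
        0 < betaB d p.2 p.2 ∧ betaB d p.2 p.2 < 1} := by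
  have key : ∀ p ∈ TubeSrc d, betaB d p.1 p.1 = 1 + betaB d p.2 p.2 ∧ 1 < betaB d p.1 p.1 := by
    rintro p ⟨h1, h2, h3⟩
    constructor <;> linarith
  refine ⟨key, ?_, ?_, ?_⟩
  · -- MapsTo
    rintro p hp
    obtain ⟨ha, hgt⟩ := key p hp
    obtain ⟨h1, h2, h3⟩ := hp
    have ha0 : 0 < betaB d p.1 p.1 := by linarith
    refine ⟨?_, ?_, ?_, ?_⟩
    · simp only [GammaMap, betaB_gamma d ha0]
      exact inv_mul_cancel₀ (ne_of_gt ha0)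
    · simp only [GammaMap, betaB_gamma d ha0, h2, mul_zero]
    · simp only [GammaMap, betaB_gamma d ha0]; positivity
    · simp only [GammaMap, betaB_gamma d ha0]
      rw [inv_mul_lt_one₀ ha0]; linarith
  · -- InjOn
    rintro p hp q hq heq
    obtain ⟨hap, hgtp⟩ := key p hp
    obtain ⟨haq, hgtq⟩ := key q hq
    set a := betaB d p.1 p.1 with hadef
    set a' := betaB d q.1 q.1 with ha'def
    have ha0 : 0 < a := by linarith
    have ha'0 : 0 < a' := by linarith
    have e3 : a⁻¹ * betaB d p.2 p.2 = a'⁻¹ * betaB d q.2 q.2 := by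
      have h2 : (GammaMap d p).2 = (GammaMap d q).2 := by rw [heq]
      have := congrArg (fun v => betaB d v v) h2
      simpa only [GammaMap, ← hadef, ← ha'def, betaB_gamma d ha0, betaB_gamma d ha'0] using this
    have hbp : betaB d p.2 p.2 = a - 1 := by linarith
    have hbq : betaB d q.2 q.2 = a' - 1 := by linarith
    rw [hbp, hbq] at e3
    have haa : a = a' := by
      field_simp at e3
      nlinarith [e3]
    have hsne : Real.sqrt a ≠ 0 := ne_of_gt (Real.sqrt_pos.mpr ha0)
    have h1 : (GammaMap d p).1 = (GammaMap d q).1 := by rw [heq]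
    have h2 : (GammaMap d p).2 = (GammaMap d q).2 := by rw [heq]
    have r1 : p.1 = q.1 := by
      have := congrArg (fun v => Real.sqrt a • v) h1
      simpa only [GammaMap, ← hadef, ← ha'def, ← haa, smul_inv_smul₀ hsne] using this
    have r2 : p.2 = q.2 := by
      have := congrArg (fun v => Real.sqrt a • v) h2
      simpa only [GammaMap, ← hadef, ← ha'def, ← haa, smul_inv_smul₀ hsne] using this
    exact Prod.ext r1 r2
  · -- SurjOn
    rintro q ⟨hq1, hq2, hq3, hq4⟩
    set c := betaB d q.2 q.2 with hcdef
    have hc1 : (0:ℝ) < 1 - c := by linarith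
    set a : ℝ := (1 - c)⁻¹ with hadef
    have ha0 : 0 < a := inv_pos.mpr hc1
    have hsa : Real.sqrt a * Real.sqrt a = a := Real.mul_self_sqrt ha0.le
    have hsane : Real.sqrt a ≠ 0 := ne_of_gt (Real.sqrt_pos.mpr ha0)
    refine ⟨(Real.sqrt a • q.1, Real.sqrt a • q.2), ?_, ?_⟩
    · refine ⟨?_, ?_, ?_⟩
      · simp only [betaB_smul_smul, hsa, hq1, hcdef.symm]
        rw [hadef]; field_simp
      · simp only [betaB_smul_smul, hq2, mul_zero]
      · simp only [betaB_smul_smul, hsa]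
        positivity
    · have hbxx : betaB d (Real.sqrt a • q.1) (Real.sqrt a • q.1) = a := by
        simp only [betaB_smul_smul, hsa, hq1, mul_one]
      simp only [GammaMap, hbxx, inv_smul_smul₀ hsane]
end
end

section
/- The positive tube domain satisfies 𝒯_M⁺ = {g·(cosh(t)·e₀ + i·sinh(t)·v) : g ∈ G, t > 0, v ∈ V₊(e₀) with β(v,v) = 1}; that is, 𝒯_M⁺ = G·Exp_{e₀}(i·V₊(e₀)) where Exp_{e₀}(i·s·v) = cosh(s)e₀ + i·sinh(s)v for β(v,v)=1, s>0. -/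
noncomputable section

namespace Stmt9Aux

open Matrix

variable {d : ℕ}

def etaM (d : ℕ) : Mat d :=
  Matrix.diagonal fun j : Fin (d + 1) => if (j : ℕ) ≤ 1 then (1 : ℝ) else -1

lemma etaM_sq : etaM d * etaM d = 1 := by
  rw [etaM, Matrix.diagonal_mul_diagonal]
  ext i j
  simp only [Matrix.diagonal_apply, Matrix.one_apply]
  split_ifs <;> norm_num

lemma beta_eq_dot (x y : Vd d) : betaB d x y = x ⬝ᵥ (etaM d).mulVec y := by
  unfold betaB dotProduct
  apply Finset.sum_congr rfl
  intro j _
  rw [etaM, Matrix.mulVec_diagonal]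
  ring

lemma betaB_smul_left (c : ℝ) (x y : Vd d) : betaB d (c • x) y = c * betaB d x y := by
  unfold betaB
  rw [Finset.mul_sum]
  apply Finset.sum_congr rfl
  intro j _
  simp [smul_eq_mul]
  ring

lemma betaB_smul_right (c : ℝ) (x y : Vd d) : betaB d x (c • y) = c * betaB d x y := by
  unfold betaB
  rw [Finset.mul_sum]
  apply Finset.sum_congr rfl
  intro j _
  simp [smul_eq_mul]
  ring

lemma betaB_e0_e0 : betaB d (evec d 0) (evec d 0) = 1 := by
  unfold betaB evec
  rw [Finset.sum_eq_single (0 : Fin (d + 1))]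
  · simp
  · intro b _ hb; simp [hb]
  · simp

def invO (d : ℕ) (g : Mat d) : Mat d := etaM d * gᵀ * etaM d

lemma obeta_mat {g : Mat d}
    (hg : ∀ x y : Vd d, betaB d (g.mulVec x) (g.mulVec y) = betaB d x y) :
    gᵀ * etaM d * g = etaM d := by
  ext i j
  have key := hg (Pi.single i 1) (Pi.single j 1)
  rw [beta_eq_dot, beta_eq_dot] at key
  rw [Matrix.mulVec_mulVec, Matrix.dotProduct_mulVec, Matrix.dotProduct_mulVec,
    Matrix.vecMul_mulVec, ← Matrix.mul_assoc] at key
  have h1 : ∀ M : Mat d, (Pi.single i 1 ᵥ* M) ⬝ᵥ Pi.single j 1 = M i j := by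
    intro M
    simp [Matrix.vecMul, dotProduct, Pi.single_apply]
  rw [h1, h1] at key
  exact key

lemma invO_mul {g : Mat d} (hg : g ∈ Obeta d) : invO d g * g = 1 := by
  have h := obeta_mat hg.2
  have : invO d g * g = etaM d * (gᵀ * etaM d * g) := by
    simp [invO, Matrix.mul_assoc]
  rw [this, h, etaM_sq]

lemma mul_invO {g : Mat d} (hg : g ∈ Obeta d) : g * invO d g = 1 :=
  mul_eq_one_comm.mp (invO_mul hg)

lemma invO_mem {g : Mat d} (hg : g ∈ Obeta d) : invO d g ∈ Obeta d := by
  refine ⟨⟨⟨invO d g, g, invO_mul hg, mul_invO hg⟩, rfl⟩, ?_⟩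
  intro x y
  rw [← hg.2 ((invO d g).mulVec x) ((invO d g).mulVec y)]
  rw [Matrix.mulVec_mulVec, Matrix.mulVec_mulVec, mul_invO hg, Matrix.one_mulVec,
    Matrix.one_mulVec]

lemma invO_one : invO d 1 = 1 := by
  rw [invO, Matrix.transpose_one, Matrix.mul_one, etaM_sq]

set_option maxHeartbeats 1000000 in
lemma invO_continuous : Continuous (invO d) := by
  have h : Continuous fun g : Mat d => etaM d * gᵀ * etaM d :=
    (continuous_const.matrix_mul continuous_id.matrix_transpose).matrix_mul continuous_const
  exact h

lemma one_mem_Obeta : (1 : Mat d) ∈ Obeta d :=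
  ⟨isUnit_one, fun x y => by rw [Matrix.one_mulVec, Matrix.one_mulVec]⟩

lemma one_mem_Gset : (1 : Mat d) ∈ Gset d := mem_connectedComponentIn one_mem_Obeta

lemma invO_Gset {g : Mat d} (hg : g ∈ Gset d) : invO d g ∈ Gset d := by
  have himg : invO d '' Gset d ⊆ connectedComponentIn (Obeta d) 1 := by
    apply IsPreconnected.subset_connectedComponentIn
      (isPreconnected_connectedComponentIn.image _ invO_continuous.continuousOn)
    · exact ⟨1, one_mem_Gset, invO_one⟩
    · rintro _ ⟨a, ha, rfl⟩
      exact invO_mem (connectedComponentIn_subset _ _ ha)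
  exact himg ⟨g, hg, rfl⟩

lemma Vplus_smul {v : Vd d} (hv : v ∈ Vplus d) {a : ℝ} (ha : 0 < a) : a • v ∈ Vplus d := by
  obtain ⟨h1, h2, h3⟩ := hv
  refine ⟨?_, ?_, ?_⟩
  · rw [betaB_smul_right, h1, mul_zero]
  · rw [betaB_smul_left, betaB_smul_right]
    exact mul_pos ha (mul_pos ha h2)
  · rw [betaB_smul_left]
    exact mul_pos ha h3

end Stmt9Aux

open Stmt9Aux Matrix Real

/-- `𝒯_M⁺ = G·Exp_{e₀}(i·V₊(e₀))`, where for `v ∈ V₊(e₀)` with `β(v,v) = 1` and `t > 0`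
one has `Exp_{e₀}(i t v) = cosh(t) e₀ + i sinh(t) v` (written as a pair). -/
theorem stmt9 (d : ℕ) (hd : 2 ≤ d) :
    TubePlus d = {p : Vd d × Vd d | ∃ g ∈ Gset d, ∃ t : ℝ, 0 < t ∧ ∃ v ∈ Vplus d,
      betaB d v v = 1 ∧
      p = (Real.cosh t • g.mulVec (evec d 0), Real.sinh t • g.mulVec v)} := by
  ext p
  constructor
  · rintro ⟨⟨h1, h2, h3⟩, g₀, hg₀, hx0, hy0⟩
    have hg₀O : g₀ ∈ Obeta d := connectedComponentIn_subset _ _ hg₀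
    set c := betaB d p.1 p.1 with hc
    set s := betaB d p.2 p.2 with hs
    have hcs : c = 1 + s := by linarith
    have hcpos : (0 : ℝ) < c := by linarith
    have hsc : 0 < Real.sqrt c := Real.sqrt_pos.mpr hcpos
    have hss : 0 < Real.sqrt s := Real.sqrt_pos.mpr h3
    set t := Real.arsinh (Real.sqrt s) with htdef
    have ht : 0 < t := Real.arsinh_pos_iff.mpr hss
    have hsinh : Real.sinh t = Real.sqrt s := Real.sinh_arsinh _
    have hcosh : Real.cosh t = Real.sqrt c := by
      rw [htdef, Real.cosh_arsinh, Real.sq_sqrt h3.le, ← hcs]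
    set w := g₀.mulVec p.2 with hw
    have hwmem : (Real.sqrt c)⁻¹ • w ∈ Vplus d := by
      rw [hw, ← Matrix.mulVec_smul]; exact hy0
    set v := (Real.sqrt s)⁻¹ • w with hv
    have hvmem : v ∈ Vplus d := by
      have := Vplus_smul hwmem (a := (Real.sqrt s)⁻¹ * Real.sqrt c)
        (mul_pos (inv_pos.mpr hss) hsc)
      rw [smul_smul] at this
      have he : (Real.sqrt s)⁻¹ * Real.sqrt c * (Real.sqrt c)⁻¹ = (Real.sqrt s)⁻¹ := by
        field_simp
      rw [he] at this
      exact this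
    have hvv : betaB d v v = 1 := by
      rw [hv, betaB_smul_left, betaB_smul_right, hw, hg₀O.2, ← hs,
        ← Real.sqrt_mul_self h3.le]
      field_simp
      rw [Real.sq_sqrt (Real.sqrt_nonneg _)]
    refine ⟨invO d g₀, invO_Gset hg₀, t, ht, v, hvmem, hvv, ?_⟩
    have hinv : ∀ u : Vd d, (invO d g₀).mulVec (g₀.mulVec u) = u := by
      intro u
      rw [Matrix.mulVec_mulVec, invO_mul hg₀O, Matrix.one_mulVec]
    have hfst : Real.cosh t • (invO d g₀).mulVec (evec d 0) = p.1 := by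
      rw [← hx0, hinv, smul_smul, hcosh, mul_inv_cancel₀ hsc.ne', one_smul]
    have hsnd : Real.sinh t • (invO d g₀).mulVec v = p.2 := by
      rw [hv, Matrix.mulVec_smul, hw, hinv, smul_smul, hsinh,
        mul_inv_cancel₀ hss.ne', one_smul]
    rw [Prod.ext_iff]
    exact ⟨hfst.symm, hsnd.symm⟩
  · rintro ⟨g, hg, t, ht, v, hv, hvv, rfl⟩
    have hgO : g ∈ Obeta d := connectedComponentIn_subset _ _ hg
    have hcosh : (0 : ℝ) < Real.cosh t := Real.cosh_pos t
    have hsinh : (0 : ℝ) < Real.sinh t := Real.sinh_pos_iff.mpr ht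
    have hxx : betaB d (Real.cosh t • g.mulVec (evec d 0)) (Real.cosh t • g.mulVec (evec d 0))
        = Real.cosh t ^ 2 := by
      rw [betaB_smul_left, betaB_smul_right, hgO.2, betaB_e0_e0]; ring
    have hyy : betaB d (Real.sinh t • g.mulVec v) (Real.sinh t • g.mulVec v)
        = Real.sinh t ^ 2 := by
      rw [betaB_smul_left, betaB_smul_right, hgO.2, hvv]; ring
    have hxy : betaB d (Real.cosh t • g.mulVec (evec d 0)) (Real.sinh t • g.mulVec v) = 0 := by
      rw [betaB_smul_left, betaB_smul_right, hgO.2, hv.1, mul_zero, mul_zero]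
    refine ⟨⟨?_, ?_, ?_⟩, ?_⟩
    · show betaB d _ _ - betaB d _ _ = 1
      rw [hxx, hyy]; exact Real.cosh_sq_sub_sinh_sq t
    · exact hxy
    · show (0:ℝ) < betaB d _ _
      rw [hyy]; exact pow_pos hsinh 2
    · have hsq : Real.sqrt (betaB d (Real.cosh t • g.mulVec (evec d 0))
          (Real.cosh t • g.mulVec (evec d 0))) = Real.cosh t := by
        rw [hxx, Real.sqrt_sq hcosh.le]
      show posPair d _ _
      refine ⟨invO d g, invO_Gset hg, ?_, ?_⟩
      · show (invO d g).mulVec (_⁻¹ • Real.cosh t • g.mulVec (evec d 0)) = evec d 0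
        rw [hsq, smul_smul, inv_mul_cancel₀ hcosh.ne', one_smul, Matrix.mulVec_mulVec,
          invO_mul hgO, Matrix.one_mulVec]
      · show (invO d g).mulVec (_⁻¹ • Real.sinh t • g.mulVec v) ∈ Vplus d
        rw [hsq, Matrix.mulVec_smul, Matrix.mulVec_smul, Matrix.mulVec_mulVec,
          invO_mul hgO, Matrix.one_mulVec, smul_smul]
        exact Vplus_smul hv (mul_pos (inv_pos.mpr hcosh) hsinh)
end
end

section
/- The fixed point set of τ̄_h in the positive tube domain satisfies {z ∈ 𝒯_M⁺ : τ̄_h(z) = z} = {g·(cosh(t)·e₀ + i·sinh(t)·e₁) : g ∈ G^{τ_h}, t > 0}. -/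
noncomputable section

/-! ### Auxiliary development -/

section Aux

variable {d : ℕ}

/-- The signature function. -/
def eta (d : ℕ) (j : Fin (d + 1)) : ℝ := if (j : ℕ) ≤ 1 then 1 else -1

lemma betaB_def (x y : Vd d) : betaB d x y = ∑ j, eta d j * x j * y j := rfl

lemma betaB_comm (x y : Vd d) : betaB d x y = betaB d y x := by
  simp only [betaB_def]; exact Finset.sum_congr rfl fun j _ => by ring

lemma betaB_add_left (x y z : Vd d) :
    betaB d (x + y) z = betaB d x z + betaB d y z := by
  simp only [betaB_def, Pi.add_apply, ← Finset.sum_add_distrib]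
  exact Finset.sum_congr rfl fun j _ => by ring

lemma betaB_smul_left (r : ℝ) (x z : Vd d) :
    betaB d (r • x) z = r * betaB d x z := by
  simp only [betaB_def, Pi.smul_apply, smul_eq_mul, Finset.mul_sum]
  exact Finset.sum_congr rfl fun j _ => by ring

lemma betaB_add_right (x y z : Vd d) :
    betaB d x (y + z) = betaB d x y + betaB d x z := by
  rw [betaB_comm, betaB_add_left, betaB_comm y x, betaB_comm z x]

lemma betaB_smul_right (r : ℝ) (x z : Vd d) :
    betaB d x (r • z) = r * betaB d x z := by
  rw [betaB_comm, betaB_smul_left, betaB_comm z x]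

lemma betaB_neg_left (x z : Vd d) : betaB d (-x) z = -betaB d x z := by
  have : (-x) = (-1 : ℝ) • x := by funext j; simp
  rw [this, betaB_smul_left]; ring

lemma betaB_neg_right (x z : Vd d) : betaB d x (-z) = -betaB d x z := by
  rw [betaB_comm, betaB_neg_left, betaB_comm z x]

lemma betaB_sub_left (x y z : Vd d) :
    betaB d (x - y) z = betaB d x z - betaB d y z := by
  have : x - y = x + -y := by funext j; simp [sub_eq_add_neg]
  rw [this, betaB_add_left, betaB_neg_left]; ring

lemma betaB_sub_right (x y z : Vd d) :
    betaB d x (y - z) = betaB d x y - betaB d x z := by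
  rw [betaB_comm, betaB_sub_left, betaB_comm y x, betaB_comm z x]

lemma aux_sq_zero {A B s t : ℝ} (hA : 0 < A) (hB : 0 < B) (h : s^2*A + t^2*B ≤ 0) :
    t = 0 := by
  by_contra ht
  have h1 : 0 < t^2 := by positivity
  nlinarith [mul_nonneg (sq_nonneg s) hA.le]

lemma betaB_zero_of (x y : Vd d) (h : ∀ j, x j * y j = 0) : betaB d x y = 0 := by
  simp only [betaB_def]
  exact Finset.sum_eq_zero fun j _ => by rw [mul_assoc, h j, mul_zero]

/-- evaluation against a basis-like vector -/
lemma betaB_single_left (i : Fin (d + 1)) (a : Vd d) (v : Vd d)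
    (ha : ∀ j, j ≠ i → a j = 0) : betaB d a v = eta d i * a i * v i := by
  rw [betaB_def]
  exact Finset.sum_eq_single i (fun j _ hj => by rw [ha j hj]; ring)
    (fun h => absurd (Finset.mem_univ i) h)

lemma eta_of_le (j : Fin (d + 1)) (h : (j : ℕ) ≤ 1) : eta d j = 1 := if_pos h

lemma eta_of_gt (j : Fin (d + 1)) (h : 1 < (j : ℕ)) : eta d j = -1 := if_neg (by omega)

/-- If the first two coordinates vanish, the form is nonpositive. -/
lemma betaB_self_nonpos (z : Vd d) (h : ∀ j : Fin (d + 1), (j : ℕ) ≤ 1 → z j = 0) :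
    betaB d z z ≤ 0 := by
  rw [betaB_def]
  apply Finset.sum_nonpos
  intro j _
  by_cases hj : (j : ℕ) ≤ 1
  · rw [h j hj]; simp
  · rw [eta_of_gt j (by omega)]; nlinarith [sq_nonneg (z j)]

lemma eq_zero_of_betaB_self (z : Vd d) (h : ∀ j : Fin (d + 1), (j : ℕ) ≤ 1 → z j = 0)
    (hz : betaB d z z = 0) : z = 0 := by
  funext j
  by_cases hj : (j : ℕ) ≤ 1
  · exact h j hj
  · rw [betaB_def] at hz
    have hterm : ∀ i ∈ Finset.univ, eta d i * z i * z i ≤ 0 := by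
      intro i _
      by_cases hi : (i : ℕ) ≤ 1
      · rw [h i hi]; simp
      · rw [eta_of_gt i (by omega)]; nlinarith [sq_nonneg (z i)]
    have := (Finset.sum_eq_zero_iff_of_nonpos hterm).1 hz j (Finset.mem_univ j)
    rw [eta_of_gt j (by omega)] at this
    have : z j * z j = 0 := by nlinarith
    simpa [Pi.zero_apply, mul_self_eq_zero] using this

/-- Nondegeneracy of the projection to the first two coordinates on positive pairs. -/
lemma det_proj_ne_zero (u v : Vd d) (f0 f1 : Fin (d + 1))
    (hf0 : (f0 : ℕ) = 0) (hf1 : (f1 : ℕ) = 1)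
    (hu : 0 < betaB d u u) (hv : 0 < betaB d v v) (huv : betaB d u v = 0) :
    u f0 * v f1 - u f1 * v f0 ≠ 0 := by
  intro hdet
  -- first kill the "1" coordinates
  have key : ∀ a b : Vd d, 0 < betaB d a a → 0 < betaB d b b → betaB d a b = 0 →
      a f0 * b f1 - a f1 * b f0 = 0 → a f1 = 0 ∧ b f1 = 0 := by
    intro a b ha hb hab hd2
    set z : Vd d := (b f1) • a - (a f1) • b with hz
    have hz0 : ∀ j : Fin (d + 1), (j : ℕ) ≤ 1 → z j = 0 := by
      intro j hj
      interval_cases h : (j : ℕ)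
      · have : j = f0 := Fin.ext (by omega)
        subst this; simp only [hz, Pi.sub_apply, Pi.smul_apply, smul_eq_mul]
        nlinarith [hd2]
      · have : j = f1 := Fin.ext (by omega)
        subst this; simp only [hz, Pi.sub_apply, Pi.smul_apply, smul_eq_mul]; ring
    have hzz : betaB d z z ≤ 0 := betaB_self_nonpos z hz0
    have hba : betaB d b a = 0 := by rw [betaB_comm]; exact hab
    have hexp : betaB d z z = (b f1)^2 * betaB d a a + (a f1)^2 * betaB d b b := by
      simp only [hz, betaB_sub_left, betaB_sub_right, betaB_smul_left, betaB_smul_right]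
      linear_combination (-(b f1 * a f1)) * hab + (-(a f1 * b f1)) * hba
    constructor
    · exact aux_sq_zero (A := betaB d a a) (B := betaB d b b) (s := b f1) (t := a f1)
        ha hb (by linarith [hexp, hzz])
    · exact aux_sq_zero (A := betaB d b b) (B := betaB d a a) (s := a f1) (t := b f1)
        hb ha (by linarith [hexp, hzz])
  obtain ⟨hu1, hv1⟩ := key u v hu hv huv hdet
  -- now the "0" coordinates
  set z : Vd d := (v f0) • u - (u f0) • v with hz
  have hz0 : ∀ j : Fin (d + 1), (j : ℕ) ≤ 1 → z j = 0 := by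
    intro j hj
    interval_cases h : (j : ℕ)
    · have : j = f0 := Fin.ext (by omega)
      subst this; simp only [hz, Pi.sub_apply, Pi.smul_apply, smul_eq_mul]; ring
    · have : j = f1 := Fin.ext (by omega)
      subst this; simp only [hz, Pi.sub_apply, Pi.smul_apply, smul_eq_mul, hu1, hv1]; ring
  have hzz : betaB d z z ≤ 0 := betaB_self_nonpos z hz0
  have hvu : betaB d v u = 0 := by rw [betaB_comm]; exact huv
  have hexp : betaB d z z = (v f0)^2 * betaB d u u + (u f0)^2 * betaB d v v := by
    simp only [hz, betaB_sub_left, betaB_sub_right, betaB_smul_left, betaB_smul_right]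
    linear_combination (-(v f0 * u f0)) * huv + (-(u f0 * v f0)) * hvu
  have hu0 : u f0 = 0 ∧ v f0 = 0 := by
    constructor
    · exact aux_sq_zero (A := betaB d u u) (B := betaB d v v) (s := v f0) (t := u f0)
        hu hv (by linarith [hexp, hzz])
    · exact aux_sq_zero (A := betaB d v v) (B := betaB d u u) (s := u f0) (t := v f0)
        hv hu (by linarith [hexp, hzz])
  -- then u has vanishing first two coordinates, contradicting positivity
  have : betaB d u u ≤ 0 := by
    apply betaB_self_nonpos
    intro j hj
    interval_cases h : (j : ℕ)
    · have : j = f0 := Fin.ext (by omega); subst this; exact hu0.1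
    · have : j = f1 := Fin.ext (by omega); subst this; exact hu1
  linarith

end Aux
/-! ### The group structure of `Gset` -/

open Matrix in
lemma aux_open_placeholder : True := trivial

open Matrix

lemma one_mem_Obeta : (1 : Mat d) ∈ Obeta d :=
  ⟨isUnit_one, fun x y => by simp [Matrix.one_mulVec]⟩

lemma one_mem_Gset : (1 : Mat d) ∈ Gset d := mem_connectedComponentIn one_mem_Obeta

lemma Gset_subset_Obeta : Gset d ⊆ Obeta d := connectedComponentIn_subset _ _

lemma mul_mem_Obeta {g h : Mat d} (hg : g ∈ Obeta d) (hh : h ∈ Obeta d) :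
    g * h ∈ Obeta d := by
  refine ⟨hg.1.mul hh.1, fun x y => ?_⟩
  rw [← Matrix.mulVec_mulVec, ← Matrix.mulVec_mulVec, hg.2, hh.2]

lemma mul_mem_Gset {g h : Mat d} (hg : g ∈ Gset d) (hh : h ∈ Gset d) :
    g * h ∈ Gset d := by
  have hgO : g ∈ Obeta d := Gset_subset_Obeta hg
  have hcont : Continuous fun m : Mat d => g * m :=
    continuous_const.matrix_mul continuous_id
  have h1 : (fun m : Mat d => g * m) '' Gset d ⊆
      connectedComponentIn ((fun m : Mat d => g * m) '' Obeta d) (g * 1) :=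
    hcont.image_connectedComponentIn_subset one_mem_Obeta
  have h2 : (fun m : Mat d => g * m) '' Obeta d ⊆ Obeta d := by
    rintro - ⟨m, hm, rfl⟩; exact mul_mem_Obeta hgO hm
  have h3 : connectedComponentIn ((fun m : Mat d => g * m) '' Obeta d) (g * 1) ⊆
      connectedComponentIn (Obeta d) (g * 1) := connectedComponentIn_mono _ h2
  have h4 : g * h ∈ connectedComponentIn (Obeta d) (g * 1) :=
    h3 (h1 ⟨h, hh, rfl⟩)
  rw [mul_one] at h4
  have h5 : connectedComponentIn (Obeta d) (1 : Mat d) =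
      connectedComponentIn (Obeta d) g := connectedComponentIn_eq hg
  rw [Gset, h5]
  exact h4

/-- The matrix of the form. -/
def Jmat (d : ℕ) : Mat d := Matrix.diagonal (eta d)

lemma Jmat_mul_Jmat : Jmat d * Jmat d = 1 := by
  rw [Jmat, Matrix.diagonal_mul_diagonal]
  have : (fun j => eta d j * eta d j) = fun _ => (1 : ℝ) := by
    funext j; by_cases hj : (j : ℕ) ≤ 1 <;> simp [eta, hj]
  rw [this, Matrix.diagonal_one]

lemma betaB_eq_dot (x y : Vd d) : betaB d x y = x ⬝ᵥ ((Jmat d).mulVec y) := by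
  rw [betaB_def, dotProduct]
  exact Finset.sum_congr rfl fun j _ => by
    rw [Jmat, Matrix.mulVec_diagonal]; ring

lemma mulVec_dotProduct_eq (A : Mat d) (x w : Vd d) :
    (A *ᵥ x) ⬝ᵥ w = x ⬝ᵥ (Aᵀ *ᵥ w) := by
  simp only [Matrix.mulVec, dotProduct, Matrix.transpose_apply, Finset.sum_mul,
    Finset.mul_sum]
  rw [Finset.sum_comm]
  exact Finset.sum_congr rfl fun j _ => Finset.sum_congr rfl fun i _ => by ring

lemma Obeta_transpose_rel {g : Mat d} (hg : g ∈ Obeta d) :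
    gᵀ * Jmat d * g = Jmat d := by
  have key : ∀ x y : Vd d, x ⬝ᵥ ((gᵀ * Jmat d * g).mulVec y) = x ⬝ᵥ ((Jmat d).mulVec y) := by
    intro x y
    have h := hg.2 x y
    rw [betaB_eq_dot, betaB_eq_dot] at h
    calc x ⬝ᵥ ((gᵀ * Jmat d * g) *ᵥ y)
        = x ⬝ᵥ (gᵀ *ᵥ ((Jmat d * g) *ᵥ y)) := by
          rw [Matrix.mulVec_mulVec, Matrix.mul_assoc]
      _ = (g *ᵥ x) ⬝ᵥ ((Jmat d * g) *ᵥ y) := (mulVec_dotProduct_eq g x _).symm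
      _ = (g *ᵥ x) ⬝ᵥ (Jmat d *ᵥ (g *ᵥ y)) := by rw [Matrix.mulVec_mulVec]
      _ = x ⬝ᵥ (Jmat d *ᵥ y) := h
  ext i j
  have := key (Pi.single i 1) (Pi.single j 1)
  rwa [Matrix.mulVec_single_one, Matrix.mulVec_single_one, single_dotProduct, single_dotProduct,
    one_mul, one_mul] at this

/-- explicit inverse inside `O(β)` -/
lemma Obeta_inv_mul {g : Mat d} (hg : g ∈ Obeta d) :
    (Jmat d * gᵀ * Jmat d) * g = 1 := by
  have h := Obeta_transpose_rel hg
  calc (Jmat d * gᵀ * Jmat d) * g = Jmat d * (gᵀ * Jmat d * g) := by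
        rw [Matrix.mul_assoc, Matrix.mul_assoc, Matrix.mul_assoc]
    _ = Jmat d * Jmat d := by rw [h]
    _ = 1 := Jmat_mul_Jmat

lemma Obeta_mul_inv {g : Mat d} (hg : g ∈ Obeta d) :
    g * (Jmat d * gᵀ * Jmat d) = 1 :=
  mul_eq_one_comm.mp (Obeta_inv_mul hg)

lemma inv_mem_Obeta {g : Mat d} (hg : g ∈ Obeta d) :
    Jmat d * gᵀ * Jmat d ∈ Obeta d := by
  refine ⟨⟨⟨Jmat d * gᵀ * Jmat d, g, Obeta_inv_mul hg, Obeta_mul_inv hg⟩, rfl⟩, fun x y => ?_⟩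
  set k := Jmat d * gᵀ * Jmat d
  have := hg.2 (k.mulVec x) (k.mulVec y)
  rw [Matrix.mulVec_mulVec, Matrix.mulVec_mulVec, Obeta_mul_inv hg, Matrix.one_mulVec,
    Matrix.one_mulVec] at this
  exact this.symm

lemma inv_mem_Gset {g : Mat d} (hg : g ∈ Gset d) :
    Jmat d * gᵀ * Jmat d ∈ Gset d := by
  have hcont : Continuous fun m : Mat d => Jmat d * mᵀ * Jmat d :=
    (continuous_const.matrix_mul continuous_id.matrix_transpose).matrix_mul continuous_const
  have h1 : (fun m : Mat d => Jmat d * mᵀ * Jmat d) '' Gset d ⊆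
      connectedComponentIn ((fun m : Mat d => Jmat d * mᵀ * Jmat d) '' Obeta d)
        (Jmat d * (1 : Mat d)ᵀ * Jmat d) :=
    hcont.image_connectedComponentIn_subset one_mem_Obeta
  have h2 : (fun m : Mat d => Jmat d * mᵀ * Jmat d) '' Obeta d ⊆ Obeta d := by
    rintro - ⟨m, hm, rfl⟩; exact inv_mem_Obeta hm
  have h4 := (connectedComponentIn_mono _ h2) (h1 ⟨g, hg, rfl⟩)
  rwa [Matrix.transpose_one, Matrix.mul_one, Jmat_mul_Jmat] at h4

/-- Inverses in `Gset`, packaged. -/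
lemma Gset_inv {g : Mat d} (hg : g ∈ Gset d) :
    ∃ g' ∈ Gset d, g' * g = 1 ∧ g * g' = 1 :=
  ⟨Jmat d * gᵀ * Jmat d, inv_mem_Gset hg,
    Obeta_inv_mul (Gset_subset_Obeta hg), Obeta_mul_inv (Gset_subset_Obeta hg)⟩
/-! ### Generalized rotations and boosts -/

/-- The image vector of a generalized rotation/boost in the plane spanned by `a, b`. -/
def genVec (d : ℕ) (a b : Vd d) (e c s : ℝ) (x : Vd d) : Vd d :=
  x + ((c - 1) * betaB d a x - s * betaB d b x) • a
    + (s * betaB d a x + e * (c - 1) * betaB d b x) • b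

/-- The matrix of a generalized rotation (`e = 1`) or boost (`e = -1`). -/
def genM (d : ℕ) (a b : Vd d) (e c s : ℝ) : Mat d :=
  Matrix.of fun i j =>
    (if i = j then (1 : ℝ) else 0)
    + ((c - 1) * a i + s * b i) * (eta d j * a j)
    + (-s * a i + e * (c - 1) * b i) * (eta d j * b j)

lemma genM_mulVec (a b : Vd d) (e c s : ℝ) (x : Vd d) :
    (genM d a b e c s).mulVec x = genVec d a b e c s x := by
  funext i
  have h1 : (genM d a b e c s).mulVec x i
      = ∑ j, ((if i = j then (1:ℝ) else 0) * x j
        + (((c - 1) * a i + s * b i) * (eta d j * a j)) * x j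
        + ((-s * a i + e * (c - 1) * b i) * (eta d j * b j)) * x j) := by
    rw [Matrix.mulVec, dotProduct]
    exact Finset.sum_congr rfl fun j _ => by
      simp only [genM, Matrix.of_apply]; ring
  rw [h1, Finset.sum_add_distrib, Finset.sum_add_distrib]
  have hA : ∑ j, (if i = j then (1:ℝ) else 0) * x j = x i := by
    rw [Finset.sum_eq_single i]
    · simp
    · intro j _ hj; rw [if_neg (fun h => hj h.symm), zero_mul]
    · intro h; exact absurd (Finset.mem_univ i) h
  have hB : ∑ j, (((c - 1) * a i + s * b i) * (eta d j * a j)) * x j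
      = ((c - 1) * a i + s * b i) * betaB d a x := by
    rw [betaB_def, Finset.mul_sum]
    exact Finset.sum_congr rfl fun j _ => by ring
  have hC : ∑ j, ((-s * a i + e * (c - 1) * b i) * (eta d j * b j)) * x j
      = (-s * a i + e * (c - 1) * b i) * betaB d b x := by
    rw [betaB_def, Finset.mul_sum]
    exact Finset.sum_congr rfl fun j _ => by ring
  rw [hA, hB, hC]
  simp only [genVec, Pi.add_apply, Pi.smul_apply, smul_eq_mul]
  ring

section GenHyp

variable {a b : Vd d} {e : ℝ}
variable (ha : betaB d a a = 1) (hb : betaB d b b = e) (hab : betaB d a b = 0)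
variable (he : e = 1 ∨ e = -1)

include ha hb hab he in
lemma betaB_genVec {c s : ℝ} (hcs : c^2 + e * s^2 = 1) (x y : Vd d) :
    betaB d (genVec d a b e c s x) (genVec d a b e c s y) = betaB d x y := by
  have hba : betaB d b a = 0 := by rw [betaB_comm]; exact hab
  simp only [genVec, betaB_add_left, betaB_add_right, betaB_smul_left, betaB_smul_right]
  rw [betaB_comm x a, betaB_comm x b]
  rw [ha, hb, hab, hba]
  rcases he with rfl | rfl
  · linear_combination (betaB d a x * betaB d a y + betaB d b x * betaB d b y) * hcs
  · linear_combination (betaB d a x * betaB d a y - betaB d b x * betaB d b y) * hcs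

include ha hb hab he in
lemma genVec_cancel {c s : ℝ} (hcs : c^2 + e * s^2 = 1) (x : Vd d) :
    genVec d a b e c s (genVec d a b e c (-s) x) = x := by
  have hba : betaB d b a = 0 := by rw [betaB_comm]; exact hab
  set y := genVec d a b e c (-s) x with hy
  have hay : betaB d a y = c * betaB d a x + s * betaB d b x := by
    rw [hy]; simp only [genVec, betaB_add_right, betaB_smul_right]
    rw [ha, hab]; ring
  have hby : betaB d b y = -(e * s) * betaB d a x + c * betaB d b x := by
    rw [hy]; simp only [genVec, betaB_add_right, betaB_smul_right]
    rw [hb, hba]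
    rcases he with rfl | rfl <;> ring
  funext j
  simp only [genVec, Pi.add_apply, Pi.smul_apply, smul_eq_mul, hay, hby]
  rw [hy]; simp only [genVec, Pi.add_apply, Pi.smul_apply, smul_eq_mul]
  rcases he with rfl | rfl
  · linear_combination (a j * betaB d a x + b j * betaB d b x) * hcs
  · linear_combination (a j * betaB d a x - b j * betaB d b x) * hcs

/-- Matrices are determined by their action on vectors. -/
lemma mat_eq_of_mulVec {A B : Mat d} (h : ∀ x : Vd d, A.mulVec x = B.mulVec x) :
    A = B := by
  ext i j
  have := congrFun (h (Pi.single j 1)) i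
  simpa [Matrix.mulVec_single] using this

include ha hb hab he in
lemma genM_mul_cancel {c s : ℝ} (hcs : c^2 + e * s^2 = 1) :
    genM d a b e c s * genM d a b e c (-s) = 1 := by
  apply mat_eq_of_mulVec
  intro x
  rw [← Matrix.mulVec_mulVec, genM_mulVec, genM_mulVec, genVec_cancel ha hb hab he hcs,
    Matrix.one_mulVec]

include ha hb hab he in
lemma genM_mem_Obeta {c s : ℝ} (hcs : c^2 + e * s^2 = 1) :
    genM d a b e c s ∈ Obeta d := by
  have hcs' : c^2 + e * (-s)^2 = 1 := by rw [neg_sq]; exact hcs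
  have h1 : genM d a b e c s * genM d a b e c (-s) = 1 := genM_mul_cancel ha hb hab he hcs
  have h2 : genM d a b e c (-s) * genM d a b e c s = 1 := by
    have := genM_mul_cancel ha hb hab he hcs'
    rwa [neg_neg] at this
  refine ⟨⟨⟨genM d a b e c s, genM d a b e c (-s), h1, h2⟩, rfl⟩, fun x y => ?_⟩
  rw [genM_mulVec, genM_mulVec, betaB_genVec ha hb hab he hcs]

lemma genM_one (a b : Vd d) (e : ℝ) : genM d a b e 1 0 = 1 := by
  ext i j
  simp [genM, Matrix.one_apply]

include ha hb hab he in
lemma genM_mem_Gset (cf sf : ℝ → ℝ) (hcf : Continuous cf) (hsf : Continuous sf)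
    (h0 : cf 0 = 1) (h0' : sf 0 = 0) (hcs : ∀ t, (cf t)^2 + e * (sf t)^2 = 1) (t : ℝ) :
    genM d a b e (cf t) (sf t) ∈ Gset d := by
  have hcont : Continuous fun t : ℝ => genM d a b e (cf t) (sf t) := by
    apply continuous_pi; intro i; apply continuous_pi; intro j
    show Continuous fun t : ℝ => (if i = j then (1:ℝ) else 0)
      + ((cf t - 1) * a i + sf t * b i) * (eta d j * a j)
      + (-(sf t) * a i + e * (cf t - 1) * b i) * (eta d j * b j)
    exact (continuous_const.add
      ((((hcf.sub continuous_const).mul continuous_const).add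
        (hsf.mul continuous_const)).mul continuous_const)).add
      (((hsf.neg.mul continuous_const).add
        ((continuous_const.mul (hcf.sub continuous_const)).mul continuous_const)).mul continuous_const)
  set S : Set (Mat d) := Set.range fun t : ℝ => genM d a b e (cf t) (sf t) with hS
  have hpre : IsPreconnected S := by
    rw [hS, ← Set.image_univ]
    exact isPreconnected_univ.image _ hcont.continuousOn
  have hone : (1 : Mat d) ∈ S := ⟨0, by show genM d a b e (cf 0) (sf 0) = 1; rw [h0, h0', genM_one]⟩
  have hsub : S ⊆ Obeta d := by
    rintro - ⟨t, rfl⟩; exact genM_mem_Obeta ha hb hab he (hcs t)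
  have := hpre.subset_connectedComponentIn hone hsub
  exact this ⟨t, rfl⟩

end GenHyp
/-! ### Coordinate facts -/

lemma fin1_eq (hd2 : 2 ≤ d) : (1 : Fin (d+1)) = ⟨1, by omega⟩ := by
  apply Fin.ext; rw [Fin.val_one']; exact Nat.mod_eq_of_lt (by omega)

lemma betaB_evec_left (i : Fin (d+1)) (v : Vd d) :
    betaB d (evec d i) v = eta d i * v i := by
  have h := betaB_single_left i (evec d i) v (fun j hj => if_neg hj)
  rw [h, evec, if_pos rfl, mul_one]

lemma betaB_evec_right (i : Fin (d+1)) (v : Vd d) :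
    betaB d v (evec d i) = eta d i * v i := by
  rw [betaB_comm]; exact betaB_evec_left i v

lemma eta_zero : eta d 0 = 1 := eta_of_le _ (by simp)

lemma eta_one (hd2 : 2 ≤ d) : eta d 1 = 1 :=
  eta_of_le _ (by rw [fin1_eq hd2])

lemma betaB_ev0_left (v : Vd d) : betaB d (evec d 0) v = v 0 := by
  rw [betaB_evec_left, eta_zero, one_mul]

lemma betaB_ev0_right (v : Vd d) : betaB d v (evec d 0) = v 0 := by
  rw [betaB_comm]; exact betaB_ev0_left v

lemma betaB_ev1_left (hd2 : 2 ≤ d) (v : Vd d) : betaB d (evec d 1) v = v 1 := by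
  rw [betaB_evec_left, eta_one hd2, one_mul]

lemma betaB_ev1_right (hd2 : 2 ≤ d) (v : Vd d) : betaB d v (evec d 1) = v 1 := by
  rw [betaB_comm]; exact betaB_ev1_left hd2 v

lemma betaB_ev0_ev0 : betaB d (evec d 0) (evec d 0) = 1 := by
  rw [betaB_ev0_left, evec, if_pos rfl]

lemma betaB_ev1_ev1 (hd2 : 2 ≤ d) : betaB d (evec d 1) (evec d 1) = 1 := by
  rw [betaB_ev1_left hd2, evec, if_pos rfl]

lemma betaB_ev0_ev1 (hd2 : 2 ≤ d) : betaB d (evec d 0) (evec d 1) = 0 := by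
  rw [betaB_ev0_left, evec, if_neg]
  intro h
  have := congrArg Fin.val h
  rw [Fin.val_zero, fin1_eq hd2] at this
  exact absurd this (by simp)

lemma betaB_ev1_ev0 (hd2 : 2 ≤ d) : betaB d (evec d 1) (evec d 0) = 0 := by
  rw [betaB_comm]; exact betaB_ev0_ev1 hd2

/-- The third basis vector, defined by a predicate on values. -/
def sv2 (d : ℕ) : Vd d := fun j => if (j : ℕ) = 2 then 1 else 0

lemma sv2_eq (hd2 : 2 ≤ d) : sv2 d = evec d ⟨2, by omega⟩ := by
  funext j; simp only [sv2, evec, Fin.ext_iff]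

lemma betaB_sv2_left (hd2 : 2 ≤ d) (v : Vd d) :
    betaB d (sv2 d) v = -(v ⟨2, by omega⟩) := by
  rw [sv2_eq hd2, betaB_evec_left, eta_of_gt _ (by norm_num)]
  ring

lemma betaB_sv2_sv2 (hd2 : 2 ≤ d) : betaB d (sv2 d) (sv2 d) = -1 := by
  rw [betaB_sv2_left hd2, sv2]; norm_num

lemma betaB_ev1_sv2 (hd2 : 2 ≤ d) : betaB d (evec d 1) (sv2 d) = 0 := by
  rw [betaB_ev1_left hd2, sv2, fin1_eq hd2]; norm_num

lemma betaB_sv2_ev1 (hd2 : 2 ≤ d) : betaB d (sv2 d) (evec d 1) = 0 := by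
  rw [betaB_comm]; exact betaB_ev1_sv2 hd2

lemma betaB_ev0_sv2 (hd2 : 2 ≤ d) : betaB d (evec d 0) (sv2 d) = 0 := by
  rw [betaB_ev0_left, sv2]; norm_num

lemma betaB_sv2_ev0 (hd2 : 2 ≤ d) : betaB d (sv2 d) (evec d 0) = 0 := by
  rw [betaB_comm]; exact betaB_ev0_sv2 hd2

lemma tauh_mulVec (x : Vd d) (j : Fin (d+1)) :
    (tauh d).mulVec x j = (if (j : ℕ) = 1 ∨ (j : ℕ) = 2 then (-1:ℝ) else 1) * x j := by
  rw [tauh, Matrix.mulVec_diagonal]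

lemma evec_one_apply (hd2 : 2 ≤ d) (j : Fin (d+1)) :
    evec d 1 j = if (j : ℕ) = 1 then 1 else 0 := by
  rw [evec, fin1_eq hd2]
  congr 1
  simp [Fin.ext_iff]

lemma evec_zero_apply (j : Fin (d+1)) :
    evec d 0 j = if (j : ℕ) = 0 then 1 else 0 := by
  rw [evec]
  congr 1
  simp only [Fin.ext_iff, Fin.val_zero]
/-! ### Commutation with `tauh` -/

lemma genM_comm_tauh (a b : Vd d) (e c s : ℝ)
    (h : (∀ j : Fin (d+1), ((j:ℕ) = 1 ∨ (j:ℕ) = 2) → a j = 0 ∧ b j = 0) ∨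
         (∀ j : Fin (d+1), ¬((j:ℕ) = 1 ∨ (j:ℕ) = 2) → a j = 0 ∧ b j = 0)) :
    genM d a b e c s * tauh d = tauh d * genM d a b e c s := by
  ext i j
  rw [tauh, Matrix.mul_diagonal, Matrix.diagonal_mul]
  by_cases hi : (i:ℕ) = 1 ∨ (i:ℕ) = 2 <;> by_cases hj : (j:ℕ) = 1 ∨ (j:ℕ) = 2
  · rw [if_pos hi, if_pos hj]; ring
  · -- entry must vanish
    have hij : i ≠ j := fun hh => hj (hh ▸ hi)
    have hzero : genM d a b e c s i j = 0 := by
      rcases h with h | h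
      · obtain ⟨ha0, hb0⟩ := h i hi
        simp only [genM, Matrix.of_apply, if_neg hij, ha0, hb0]; ring
      · obtain ⟨ha0, hb0⟩ := h j (fun hh => hj hh)
        simp only [genM, Matrix.of_apply, if_neg hij, ha0, hb0]; ring
    rw [hzero]; ring
  · have hij : i ≠ j := fun hh => hi (hh ▸ hj)
    have hzero : genM d a b e c s i j = 0 := by
      rcases h with h | h
      · obtain ⟨ha0, hb0⟩ := h j hj
        simp only [genM, Matrix.of_apply, if_neg hij, ha0, hb0]; ring
      · obtain ⟨ha0, hb0⟩ := h i (fun hh => hi hh)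
        simp only [genM, Matrix.of_apply, if_neg hij, ha0, hb0]; ring
    rw [hzero]; ring
  · rw [if_neg hi, if_neg hj]; ring

/-! ### The rotation by π in the (0,1)-plane -/

lemma rho_offdiag (hd2 : 2 ≤ d) {i j : Fin (d+1)} (hij : i ≠ j) :
    genM d (evec d 0) (evec d 1) 1 (-1) 0 i j = 0 := by
  simp only [genM, Matrix.of_apply, if_neg hij, evec_zero_apply, evec_one_apply hd2]
  by_cases hi0 : (i:ℕ) = 0 <;> by_cases hj0 : (j:ℕ) = 0 <;>
    by_cases hi1 : (i:ℕ) = 1 <;> by_cases hj1 : (j:ℕ) = 1 <;>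
    first
      | (exact absurd (Fin.ext (by omega) : i = j) hij)
      | (simp only [hi0, hj0, hi1, hj1, if_true, if_false]; norm_num)

lemma rho_comm_tauh (hd2 : 2 ≤ d) :
    genM d (evec d 0) (evec d 1) 1 (-1) 0 * tauh d
      = tauh d * genM d (evec d 0) (evec d 1) 1 (-1) 0 := by
  ext i j
  rw [tauh, Matrix.mul_diagonal, Matrix.diagonal_mul]
  by_cases hij : i = j
  · subst hij; ring
  · rw [rho_offdiag hd2 hij]; ring

lemma rho_mem_Gset (hd2 : 2 ≤ d) :
    genM d (evec d 0) (evec d 1) 1 (-1) 0 ∈ Gset d := by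
  have h := genM_mem_Gset (d := d) (a := evec d 0) (b := evec d 1) (e := 1)
    betaB_ev0_ev0 (betaB_ev1_ev1 hd2) (betaB_ev0_ev1 hd2) (Or.inl rfl)
    (fun t => Real.cos (Real.pi * t)) (fun t => Real.sin (Real.pi * t))
    (by fun_prop) (by fun_prop) (by simp) (by simp)
    (fun t => by rw [one_mul]; exact Real.cos_sq_add_sin_sq _) 1
  rwa [mul_one, Real.cos_pi, Real.sin_pi] at h

lemma rho_mulVec_ev0 (hd2 : 2 ≤ d) :
    (genM d (evec d 0) (evec d 1) 1 (-1) 0).mulVec (evec d 0) = -evec d 0 := by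
  rw [genM_mulVec]
  funext j
  simp only [genVec, betaB_ev0_ev0, betaB_ev1_ev0 hd2, Pi.add_apply, Pi.smul_apply,
    smul_eq_mul, Pi.neg_apply]
  ring

lemma rho_mulVec_ev1 (hd2 : 2 ≤ d) :
    (genM d (evec d 0) (evec d 1) 1 (-1) 0).mulVec (evec d 1) = -evec d 1 := by
  rw [genM_mulVec]
  funext j
  simp only [genVec, betaB_ev0_ev1 hd2, betaB_ev1_ev1 hd2, Pi.add_apply, Pi.smul_apply,
    smul_eq_mul, Pi.neg_apply]
  ring
/-! ### Constructing the witness in `G^{τ_h}` -/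

set_option maxHeartbeats 1200000 in
lemma construct_g (hd2 : 2 ≤ d) (u v : Vd d)
    (hu : betaB d u u = 1) (hu12 : ∀ j : Fin (d+1), ((j:ℕ) = 1 ∨ (j:ℕ) = 2) → u j = 0)
    (hu0 : 0 < u 0)
    (hv : betaB d v v = 1) (hvs : ∀ j : Fin (d+1), ¬((j:ℕ) = 1 ∨ (j:ℕ) = 2) → v j = 0)
    (hv1 : 0 < v ⟨1, by omega⟩) :
    ∃ g ∈ Gset d, g * tauh d = tauh d * g ∧
      g.mulVec (evec d 0) = u ∧ g.mulVec (evec d 1) = v := by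
  set v1 := v ⟨1, by omega⟩ with hv1def
  set v2 := v ⟨2, by omega⟩ with hv2def
  have hvrep : v = v1 • evec d 1 + v2 • sv2 d := by
    funext j
    simp only [Pi.add_apply, Pi.smul_apply, smul_eq_mul, evec_one_apply hd2, sv2]
    by_cases hj1 : (j : ℕ) = 1
    · have : j = (⟨1, by omega⟩ : Fin (d+1)) := Fin.ext hj1
      rw [this]; simp [hv1def]
    · by_cases hj2 : (j : ℕ) = 2
      · have : j = (⟨2, by omega⟩ : Fin (d+1)) := Fin.ext hj2
        rw [this]; simp [hv2def, hj1]
      · rw [if_neg hj1, if_neg hj2, hvs j (by tauto)]; ring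
  have hv12 : v1^2 - v2^2 = 1 := by
    have hvv := hv
    rw [hvrep] at hvv
    simp only [betaB_add_left, betaB_add_right, betaB_smul_left, betaB_smul_right,
      betaB_ev1_ev1 hd2, betaB_sv2_sv2 hd2, betaB_ev1_sv2 hd2, betaB_sv2_ev1 hd2] at hvv
    nlinarith [hvv]
  have hv1sq : v1^2 = 1 + v2^2 := by linarith
  -- the boost in the (1,2)-plane
  set B2 := genM d (evec d 1) (sv2 d) (-1) v1 v2 with hB2def
  have hB2G : B2 ∈ Gset d := by
    have h := genM_mem_Gset (d := d) (betaB_ev1_ev1 hd2) (betaB_sv2_sv2 hd2)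
      (betaB_ev1_sv2 hd2) (Or.inr rfl)
      (fun t => Real.cosh (t * Real.arsinh v2)) (fun t => Real.sinh (t * Real.arsinh v2))
      (by fun_prop) (by fun_prop) (by simp) (by simp)
      (fun t => by
        have := Real.cosh_sq_sub_sinh_sq (t * Real.arsinh v2)
        nlinarith [this]) 1
    rw [one_mul, Real.sinh_arsinh, Real.cosh_arsinh] at h
    have hs : Real.sqrt (1 + v2^2) = v1 := by rw [← hv1sq, Real.sqrt_sq hv1.le]
    rwa [hs] at h
  have hB2e0 : B2.mulVec (evec d 0) = evec d 0 := by
    rw [hB2def, genM_mulVec]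
    funext j
    simp only [genVec, betaB_ev1_ev0 hd2, betaB_sv2_ev0 hd2, Pi.add_apply, Pi.smul_apply,
      smul_eq_mul]
    ring
  have hB2e1 : B2.mulVec (evec d 1) = v := by
    rw [hB2def, genM_mulVec]
    funext j
    have hj := congrFun hvrep j
    simp only [Pi.add_apply, Pi.smul_apply, smul_eq_mul] at hj
    simp only [genVec, betaB_ev1_ev1 hd2, betaB_sv2_ev1 hd2, Pi.add_apply, Pi.smul_apply,
      smul_eq_mul, hj]
    ring
  have hB2comm : B2 * tauh d = tauh d * B2 := by
    apply genM_comm_tauh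
    right
    intro j hj
    constructor
    · rw [evec_one_apply hd2, if_neg (by tauto)]
    · rw [sv2, if_neg (by tauto)]
  -- the boost in the (0, rest)-plane
  set w : Vd d := u - (u 0) • evec d 0 with hwdef
  have hw01 : ∀ j : Fin (d+1), (j:ℕ) ≤ 1 → w j = 0 := by
    intro j hj
    have : (j:ℕ) = 0 ∨ (j:ℕ) = 1 := by omega
    rcases this with h0 | h1
    · have : j = (0 : Fin (d+1)) := Fin.ext (by simpa using h0)
      rw [this, hwdef]
      simp [evec_zero_apply]
    · rw [hwdef]
      simp only [Pi.sub_apply, Pi.smul_apply, smul_eq_mul, evec_zero_apply, h1]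
      rw [hu12 j (Or.inl h1)]
      norm_num
  have hww : betaB d w w = 1 - (u 0)^2 := by
    rw [hwdef, betaB_sub_left, betaB_sub_right, betaB_sub_right, betaB_smul_left,
      betaB_smul_right, betaB_smul_right, betaB_smul_left, betaB_ev0_ev0,
      betaB_ev0_left, betaB_ev0_right, hu]
    ring
  have hwle : betaB d w w ≤ 0 := betaB_self_nonpos w hw01
  have hu0ge : 1 ≤ u 0 := by nlinarith [hww, hwle, hu0]
  by_cases hu0eq : u 0 = 1
  -- degenerate case : u = e₀
  · have hw0 : w = 0 := eq_zero_of_betaB_self w hw01 (by rw [hww, hu0eq]; ring)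
    have hueq : u = evec d 0 := by
      funext j
      have := congrFun hw0 j
      rw [hwdef] at this
      simp only [Pi.sub_apply, Pi.smul_apply, smul_eq_mul, Pi.zero_apply, sub_eq_zero] at this
      rw [this, hu0eq, one_mul]
    refine ⟨B2, hB2G, hB2comm, ?_, hB2e1⟩
    rw [hB2e0, hueq]
  -- main case : compose with a boost moving e₀ to u
  · have hu0gt : 1 < u 0 := lt_of_le_of_ne hu0ge (fun h => hu0eq h.symm)
    set S := Real.sqrt ((u 0)^2 - 1) with hSdef
    have hS : 0 < S := Real.sqrt_pos.mpr (by nlinarith)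
    have hSne : S ≠ 0 := ne_of_gt hS
    have hS2 : S^2 = (u 0)^2 - 1 := Real.sq_sqrt (by nlinarith)
    set n : Vd d := S⁻¹ • w with hndef
    have hnn : betaB d n n = -1 := by
      rw [hndef, betaB_smul_left, betaB_smul_right, hww]
      field_simp
      nlinarith [hS2]
    have h0n : betaB d (evec d 0) n = 0 := by
      rw [hndef, betaB_smul_right, betaB_ev0_left, hw01 0 (by simp), mul_zero]
    have hn0 : betaB d n (evec d 0) = 0 := by rw [betaB_comm]; exact h0n
    have hn12 : ∀ j : Fin (d+1), ((j:ℕ) = 1 ∨ (j:ℕ) = 2) → n j = 0 := by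
      intro j hj
      rw [hndef]
      simp only [Pi.smul_apply, smul_eq_mul, hwdef, Pi.sub_apply, evec_zero_apply]
      rw [hu12 j hj, if_neg (by omega : ¬ (j:ℕ) = 0)]
      ring
    set B1 := genM d (evec d 0) n (-1) (u 0) S with hB1def
    have hB1G : B1 ∈ Gset d := by
      have h := genM_mem_Gset (d := d) betaB_ev0_ev0 hnn h0n (Or.inr rfl)
        (fun t => Real.cosh (t * Real.arsinh S)) (fun t => Real.sinh (t * Real.arsinh S))
        (by fun_prop) (by fun_prop) (by simp) (by simp)
        (fun t => by
          have := Real.cosh_sq_sub_sinh_sq (t * Real.arsinh S)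
          nlinarith [this]) 1
      rw [one_mul, Real.sinh_arsinh, Real.cosh_arsinh] at h
      have hs : Real.sqrt (1 + S^2) = u 0 := by
        rw [hS2]
        have : 1 + ((u 0)^2 - 1) = (u 0)^2 := by ring
        rw [this, Real.sqrt_sq hu0.le]
      rwa [hs] at h
    have hB1e0 : B1.mulVec (evec d 0) = u := by
      rw [hB1def, genM_mulVec]
      funext j
      simp only [genVec, betaB_ev0_ev0, hn0, Pi.add_apply, Pi.smul_apply, smul_eq_mul]
      have hwj : w j = u j - u 0 * evec d 0 j := by
        rw [hwdef]; simp
      rw [hndef]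
      simp only [Pi.smul_apply, smul_eq_mul]
      rw [hwj]
      field_simp
      ring
    have hB1e1 : B1.mulVec (evec d 1) = evec d 1 := by
      rw [hB1def, genM_mulVec]
      funext j
      have hn1 : betaB d n (evec d 1) = 0 := by
        rw [betaB_comm, betaB_ev1_left hd2, fin1_eq hd2, hn12 _ (Or.inl rfl)]
      simp only [genVec, betaB_ev0_ev1 hd2, hn1, Pi.add_apply, Pi.smul_apply, smul_eq_mul]
      ring
    have hB1v : B1.mulVec v = v := by
      rw [hB1def, genM_mulVec]
      funext j
      have h0v : betaB d (evec d 0) v = 0 := by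
        rw [betaB_ev0_left]
        exact hvs 0 (by simp)
      have hnv : betaB d n v = 0 := by
        apply betaB_zero_of
        intro i
        by_cases hi : (i:ℕ) = 1 ∨ (i:ℕ) = 2
        · rw [hn12 i hi, zero_mul]
        · rw [hvs i hi, mul_zero]
      simp only [genVec, h0v, hnv, Pi.add_apply, Pi.smul_apply, smul_eq_mul]
      ring
    have hB1comm : B1 * tauh d = tauh d * B1 := by
      apply genM_comm_tauh
      left
      intro j hj
      exact ⟨by rw [evec_zero_apply, if_neg (by omega : ¬ (j:ℕ) = 0)], hn12 j hj⟩
    refine ⟨B1 * B2, mul_mem_Gset hB1G hB2G, ?_, ?_, ?_⟩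
    · rw [Matrix.mul_assoc, hB2comm, ← Matrix.mul_assoc, hB1comm, Matrix.mul_assoc]
    · rw [← Matrix.mulVec_mulVec, hB2e0, hB1e0]
    · rw [← Matrix.mulVec_mulVec, hB2e1, hB1v]
/-! ### The sign invariant -/

lemma mulVec_entry_continuous (z : Vd d) (i : Fin (d+1)) :
    Continuous fun m : Mat d => m.mulVec z i := by
  simp only [Matrix.mulVec, dotProduct]
  exact continuous_finset_sum _ fun j _ =>
    ((continuous_id.matrix_elem i j).mul continuous_const)

lemma sign_invariant (hd2 : 2 ≤ d) (x y : Vd d)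
    (hx : 0 < betaB d x x) (hy : 0 < betaB d y y) (hxy : betaB d x y = 0)
    {k : Mat d} (hk : k ∈ Gset d)
    (hposk : 0 < (k.mulVec x 0) * (k.mulVec y 1) - (k.mulVec x 1) * (k.mulVec y 0)) :
    0 < x 0 * y 1 - x 1 * y 0 := by
  set f : Mat d → ℝ :=
    fun m => (m.mulVec x 0) * (m.mulVec y 1) - (m.mulVec x 1) * (m.mulVec y 0) with hf
  have hcont : Continuous f :=
    ((mulVec_entry_continuous x 0).mul (mulVec_entry_continuous y 1)).sub
      ((mulVec_entry_continuous x 1).mul (mulVec_entry_continuous y 0))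
  have hne : ∀ m ∈ Gset d, f m ≠ 0 := by
    intro m hm
    obtain ⟨-, hpres⟩ := Gset_subset_Obeta hm
    exact det_proj_ne_zero (m.mulVec x) (m.mulVec y) 0 1 (Fin.val_zero _)
      (by rw [fin1_eq hd2]) (by rw [hpres]; exact hx) (by rw [hpres]; exact hy)
      (by rw [hpres]; exact hxy)
  have hf1 : f 1 = x 0 * y 1 - x 1 * y 0 := by
    rw [hf]; simp [Matrix.one_mulVec]
  by_contra hle
  push_neg at hle
  have h1 : f 1 < 0 := by
    rw [hf1]
    exact lt_of_le_of_ne hle (by rw [← hf1]; exact hne 1 one_mem_Gset)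
  have hivt := (isPreconnected_connectedComponentIn
      (F := Obeta d) (x := (1 : Mat d))).intermediate_value₂
    (one_mem_Gset (d := d)) hk hcont.continuousOn continuousOn_const h1.le hposk.le
  obtain ⟨m, hm, hfm⟩ := hivt
  exact hne m hm hfm

lemma tauh_ev0 : (tauh d).mulVec (evec d 0) = evec d 0 := by
  funext j
  rw [tauh_mulVec, evec_zero_apply]
  by_cases hj : (j : ℕ) = 1 ∨ (j : ℕ) = 2
  · rw [if_pos hj, if_neg (by omega : ¬ (j:ℕ) = 0)]; ring
  · rw [if_neg hj, one_mul]

lemma tauh_ev1 (hd2 : 2 ≤ d) : (tauh d).mulVec (evec d 1) = -evec d 1 := by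
  funext j
  rw [tauh_mulVec, evec_one_apply hd2, Pi.neg_apply, evec_one_apply hd2]
  by_cases hj : (j : ℕ) = 1 <;> simp [hj]
set_option maxHeartbeats 1200000 in
/-- The fixed point set of the antiholomorphic extension `τ̄_h` (i.e. `τ_h x = x`,
`τ_h y = −y` for `z = x + iy`) in the positive tube domain equals
`G^{τ_h}·Exp_{e₀}(i ℝ₊ e₁)`. -/
theorem stmt10 (d : ℕ) (hd : 2 ≤ d) :
    {p ∈ TubePlus d | (tauh d).mulVec p.1 = p.1 ∧ (tauh d).mulVec p.2 = -p.2} =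
    {p : Vd d × Vd d | ∃ g ∈ Gset d, g * tauh d = tauh d * g ∧ ∃ t : ℝ, 0 < t ∧
      p = (Real.cosh t • g.mulVec (evec d 0), Real.sinh t • g.mulVec (evec d 1))} := by
  ext p
  simp only [Set.mem_sep_iff, Set.mem_setOf_eq, TubePlus, TubeSrc]
  constructor
  · rintro ⟨⟨⟨hsrc1, hsrc2, hsrc3⟩, hpos⟩, hfix1, hfix2⟩
    set x := p.1 with hxdef
    set y := p.2 with hydef
    set i1 : Fin (d+1) := ⟨1, by omega⟩ with hi1
    set i2 : Fin (d+1) := ⟨2, by omega⟩ with hi2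
    have hx1 : x i1 = 0 := by
      have h := congrFun hfix1 i1
      rw [tauh_mulVec, if_pos (Or.inl rfl)] at h
      linarith [h]
    have hx2 : x i2 = 0 := by
      have h := congrFun hfix1 i2
      rw [tauh_mulVec, if_pos (Or.inr rfl)] at h
      linarith [h]
    have hyoff : ∀ j : Fin (d+1), ¬((j:ℕ) = 1 ∨ (j:ℕ) = 2) → y j = 0 := by
      intro j hj
      have h := congrFun hfix2 j
      rw [tauh_mulVec, if_neg hj, one_mul, Pi.neg_apply] at h
      linarith [h]
    have hbxx : betaB d x x = 1 + betaB d y y := by linarith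
    have hbxxpos : 0 < betaB d x x := by linarith
    set t := Real.arsinh (Real.sqrt (betaB d y y)) with htdef
    have hsq : 0 < Real.sqrt (betaB d y y) := Real.sqrt_pos.mpr hsrc3
    have ht : 0 < t := Real.arsinh_pos_iff.mpr hsq
    have hsinh : Real.sinh t = Real.sqrt (betaB d y y) := Real.sinh_arsinh _
    have hsinhpos : 0 < Real.sinh t := by rw [hsinh]; exact hsq
    have hsinh2 : Real.sinh t ^ 2 = betaB d y y := by
      rw [hsinh, Real.sq_sqrt hsrc3.le]
    have hcosh2 : Real.cosh t ^ 2 = betaB d x x := by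
      rw [Real.cosh_sq', hsinh2, hbxx]
    have hcoshpos : 0 < Real.cosh t := Real.cosh_pos t
    have hsqrt : Real.sqrt (betaB d x x) = Real.cosh t := by
      rw [← hcosh2, Real.sqrt_sq hcoshpos.le]
    obtain ⟨k, hkG, hk1, hk2⟩ := hpos
    rw [hsqrt] at hk1 hk2
    rw [Matrix.mulVec_smul] at hk1
    have hkx : k.mulVec x = Real.cosh t • evec d 0 := by
      have h := congrArg (fun z => Real.cosh t • z) hk1
      simpa [smul_smul, mul_inv_cancel₀ hcoshpos.ne'] using h
    set wv := k.mulVec ((Real.cosh t)⁻¹ • y) with hwvdef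
    obtain ⟨hwv1, hwv2, hwv3⟩ := hk2
    rw [betaB_ev1_right hd] at hwv3
    have hky : k.mulVec y = Real.cosh t • wv := by
      rw [hwvdef, Matrix.mulVec_smul, smul_smul, mul_inv_cancel₀ hcoshpos.ne', one_smul]
    have h00 : evec d 0 0 = (1:ℝ) := by rw [evec_zero_apply]; simp
    have h01 : evec d 0 1 = (0:ℝ) := by
      rw [evec_zero_apply, fin1_eq hd]; norm_num
    have hdet : 0 < x 0 * y 1 - x 1 * y 0 := by
      apply sign_invariant hd x y hbxxpos hsrc3 hsrc2 hkG
      rw [hkx, hky]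
      simp only [Pi.smul_apply, smul_eq_mul, h00, h01]
      nlinarith [hwv3, hcoshpos]
    have hfin1 : (1 : Fin (d+1)) = i1 := fin1_eq hd
    rw [hfin1, hx1] at hdet
    have hx0ne : x 0 ≠ 0 := by
      intro h0
      have hle : betaB d x x ≤ 0 := by
        apply betaB_self_nonpos x
        intro j hj
        have hcase : (j:ℕ) = 0 ∨ (j:ℕ) = 1 := by omega
        rcases hcase with h | h
        · rw [(Fin.ext h : j = 0)]; exact h0
        · rw [(Fin.ext h : j = i1)]; exact hx1
      linarith
    set u := (Real.cosh t)⁻¹ • x with hudef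
    set vv := (Real.sinh t)⁻¹ • y with hvvdef
    have huu : betaB d u u = 1 := by
      rw [hudef, betaB_smul_left, betaB_smul_right, ← hcosh2]
      field_simp
    have hvv1 : betaB d vv vv = 1 := by
      rw [hvvdef, betaB_smul_left, betaB_smul_right, ← hsinh2]
      field_simp
    have hu12 : ∀ j : Fin (d+1), ((j:ℕ) = 1 ∨ (j:ℕ) = 2) → u j = 0 := by
      intro j hj
      rw [hudef]
      simp only [Pi.smul_apply, smul_eq_mul]
      rcases hj with h | h
      · rw [(Fin.ext h : j = i1), hx1, mul_zero]
      · rw [(Fin.ext h : j = i2), hx2, mul_zero]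
    have hvs : ∀ j : Fin (d+1), ¬((j:ℕ) = 1 ∨ (j:ℕ) = 2) → vv j = 0 := by
      intro j hj
      rw [hvvdef]
      simp only [Pi.smul_apply, smul_eq_mul]
      rw [hyoff j hj, mul_zero]
    rcases lt_or_gt_of_ne hx0ne with hneg | hposx
    · -- both negative : compose with the rotation by π
      have hy1neg : y i1 < 0 := by nlinarith [hdet]
      have hu0 : 0 < (-u) 0 := by
        rw [hudef]
        simp only [Pi.neg_apply, Pi.smul_apply, smul_eq_mul]
        have := inv_pos.mpr hcoshpos
        nlinarith
      have hv1 : 0 < (-vv) (⟨1, by omega⟩ : Fin (d+1)) := by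
        rw [hvvdef]
        simp only [Pi.neg_apply, Pi.smul_apply, smul_eq_mul]
        have := inv_pos.mpr hsinhpos
        nlinarith
      have hnu : betaB d (-u) (-u) = 1 := by
        rw [betaB_neg_left, betaB_neg_right, huu]; ring
      have hnv : betaB d (-vv) (-vv) = 1 := by
        rw [betaB_neg_left, betaB_neg_right, hvv1]; ring
      obtain ⟨g', hg'G, hg'comm, hg'e0, hg'e1⟩ := construct_g hd (-u) (-vv) hnu
        (fun j hj => by rw [Pi.neg_apply, hu12 j hj, neg_zero])
        hu0 hnv
        (fun j hj => by rw [Pi.neg_apply, hvs j hj, neg_zero])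
        hv1
      refine ⟨g' * genM d (evec d 0) (evec d 1) 1 (-1) 0,
        mul_mem_Gset hg'G (rho_mem_Gset hd), ?_, t, ht, ?_⟩
      · rw [Matrix.mul_assoc, rho_comm_tauh hd, ← Matrix.mul_assoc, hg'comm,
          Matrix.mul_assoc]
      · have he0 : (g' * genM d (evec d 0) (evec d 1) 1 (-1) 0).mulVec (evec d 0) = u := by
          rw [← Matrix.mulVec_mulVec, rho_mulVec_ev0 hd, Matrix.mulVec_neg, hg'e0, neg_neg]
        have he1 : (g' * genM d (evec d 0) (evec d 1) 1 (-1) 0).mulVec (evec d 1) = vv := by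
          rw [← Matrix.mulVec_mulVec, rho_mulVec_ev1 hd, Matrix.mulVec_neg, hg'e1, neg_neg]
        rw [he0, he1, hudef, hvvdef, smul_inv_smul₀ hcoshpos.ne', smul_inv_smul₀ hsinhpos.ne']
    · -- both positive
      have hy1pos : 0 < y i1 := by nlinarith [hdet]
      have hu0 : 0 < u 0 := by
        rw [hudef]
        simp only [Pi.smul_apply, smul_eq_mul]
        have := inv_pos.mpr hcoshpos
        nlinarith
      have hv1 : 0 < vv (⟨1, by omega⟩ : Fin (d+1)) := by
        rw [hvvdef]
        simp only [Pi.smul_apply, smul_eq_mul]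
        have := inv_pos.mpr hsinhpos
        nlinarith
      obtain ⟨g', hg'G, hg'comm, hg'e0, hg'e1⟩ := construct_g hd u vv huu hu12 hu0 hvv1 hvs hv1
      refine ⟨g', hg'G, hg'comm, t, ht, ?_⟩
      rw [hg'e0, hg'e1, hudef, hvvdef, smul_inv_smul₀ hcoshpos.ne', smul_inv_smul₀ hsinhpos.ne']
  · rintro ⟨g, hgG, hgcomm, t, ht, hp⟩
    have hgO := Gset_subset_Obeta hgG
    have hpres := hgO.2
    have hsinhpos : 0 < Real.sinh t := Real.sinh_pos_iff.mpr ht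
    have hcoshpos : 0 < Real.cosh t := Real.cosh_pos t
    set E0 := g.mulVec (evec d 0) with hE0
    set E1 := g.mulVec (evec d 1) with hE1
    have h00 : betaB d E0 E0 = 1 := by rw [hE0, hpres, betaB_ev0_ev0]
    have h11 : betaB d E1 E1 = 1 := by rw [hE1, hpres, betaB_ev1_ev1 hd]
    have h01 : betaB d E0 E1 = 0 := by rw [hE0, hE1, hpres, betaB_ev0_ev1 hd]
    have hT0 : (tauh d).mulVec E0 = E0 := by
      rw [hE0, Matrix.mulVec_mulVec, ← hgcomm, ← Matrix.mulVec_mulVec, tauh_ev0]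
    have hT1 : (tauh d).mulVec E1 = -E1 := by
      rw [hE1, Matrix.mulVec_mulVec, ← hgcomm, ← Matrix.mulVec_mulVec, tauh_ev1 hd,
        Matrix.mulVec_neg]
    subst hp
    have hfst : (Real.cosh t • E0, Real.sinh t • E1).1 = Real.cosh t • E0 := rfl
    have hsnd : (Real.cosh t • E0, Real.sinh t • E1).2 = Real.sinh t • E1 := rfl
    rw [hfst, hsnd]
    have hbxx : betaB d (Real.cosh t • E0) (Real.cosh t • E0) = Real.cosh t ^ 2 := by
      rw [betaB_smul_left, betaB_smul_right, h00]; ring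
    have hsqrt : Real.sqrt (betaB d (Real.cosh t • E0) (Real.cosh t • E0)) = Real.cosh t := by
      rw [hbxx, Real.sqrt_sq hcoshpos.le]
    obtain ⟨k, hkG, hki, hik⟩ := Gset_inv hgG
    have hkE0 : k.mulVec E0 = evec d 0 := by
      rw [hE0, Matrix.mulVec_mulVec, hki, Matrix.one_mulVec]
    have hkE1 : k.mulVec E1 = evec d 1 := by
      rw [hE1, Matrix.mulVec_mulVec, hki, Matrix.one_mulVec]
    set r := (Real.cosh t)⁻¹ * Real.sinh t with hrdef
    have hr : 0 < r := mul_pos (inv_pos.mpr hcoshpos) hsinhpos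
    refine ⟨⟨⟨?_, ?_, ?_⟩, ?_⟩, ?_, ?_⟩
    · rw [hbxx, betaB_smul_left, betaB_smul_right, h11]
      have := Real.cosh_sq_sub_sinh_sq t
      nlinarith [this]
    · rw [betaB_smul_left, betaB_smul_right, h01]; ring
    · rw [betaB_smul_left, betaB_smul_right, h11]; nlinarith [hsinhpos]
    · -- positivity of the pair
      rw [hsqrt]
      refine ⟨k, hkG, ?_, ?_⟩
      · rw [Matrix.mulVec_smul, Matrix.mulVec_smul, hkE0, smul_smul,
          inv_mul_cancel₀ hcoshpos.ne', one_smul]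
      · have hval : k.mulVec ((Real.cosh t)⁻¹ • Real.sinh t • E1) = r • evec d 1 := by
          rw [Matrix.mulVec_smul, Matrix.mulVec_smul, hkE1, smul_smul, hrdef]
        rw [hval]
        refine ⟨?_, ?_, ?_⟩
        · rw [betaB_smul_right, betaB_ev0_ev1 hd, mul_zero]
        · rw [betaB_smul_left, betaB_smul_right, betaB_ev1_ev1 hd]; nlinarith [hr]
        · rw [betaB_smul_left, betaB_ev1_ev1 hd]; nlinarith [hr]
    · rw [Matrix.mulVec_smul, hT0]
    · rw [Matrix.mulVec_smul, hT1, smul_neg]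
end
end

section
/- The positivity domain of the modular vector field on anti-de Sitter space satisfies W_M⁺(h) = {g·x : g ∈ G^h, x ∈ M with x_j = 0 for all j ∉ {0,2} and x₀·x₂ > 0} (equivalently, W_M⁺(h) = G^h·{x₀e₀ + x₂e₂ : x₀² − x₂² = 1, x₀x₂ > 0}). -/
noncomputable section

-- ===================== auxiliary development =====================
namespace Stmt11

variable {d : ℕ}

/-- form coefficient -/
def cf (d : ℕ) (j : Fin (d+1)) : ℝ := if (j : ℕ) ≤ 1 then 1 else -1

lemma betaB_def (x y : Vd d) : betaB d x y = ∑ j, cf d j * x j * y j := rfl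

lemma val0 : ((0 : Fin (d+1)) : ℕ) = 0 := rfl
lemma val1 (hd : 2 ≤ d) : ((1 : Fin (d+1)) : ℕ) = 1 := by
  show 1 % (d+1) = 1; exact Nat.mod_eq_of_lt (by omega)
lemma val2 (hd : 2 ≤ d) : ((2 : Fin (d+1)) : ℕ) = 2 := by
  show 2 % (d+1) = 2; exact Nat.mod_eq_of_lt (by omega)

lemma eq0_iff (hd : 2 ≤ d) (j : Fin (d+1)) : j = 0 ↔ (j : ℕ) = 0 := by
  rw [Fin.ext_iff, val0]
lemma eq1_iff (hd : 2 ≤ d) (j : Fin (d+1)) : j = 1 ↔ (j : ℕ) = 1 := by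
  rw [Fin.ext_iff, val1 hd]
lemma eq2_iff (hd : 2 ≤ d) (j : Fin (d+1)) : j = 2 ↔ (j : ℕ) = 2 := by
  rw [Fin.ext_iff, val2 hd]

lemma cf0 (hd : 2 ≤ d) : cf d 0 = 1 := by simp [cf, val0]
lemma cf1 (hd : 2 ≤ d) : cf d 1 = 1 := by unfold cf; rw [val1 hd]; norm_num
lemma cf2 (hd : 2 ≤ d) : cf d 2 = -1 := by unfold cf; rw [val2 hd]; norm_num

lemma cf_sq (j : Fin (d+1)) : cf d j * cf d j = 1 := by
  unfold cf; split_ifs <;> norm_num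

lemma betaB_comm (x y : Vd d) : betaB d x y = betaB d y x := by
  unfold betaB; congr 1; funext j; ring

lemma betaB_add_left (x y z : Vd d) :
    betaB d (x + y) z = betaB d x z + betaB d y z := by
  unfold betaB; rw [← Finset.sum_add_distrib]; congr 1; funext j
  simp only [Pi.add_apply]; split_ifs <;> ring

lemma betaB_add_right (x y z : Vd d) :
    betaB d x (y + z) = betaB d x y + betaB d x z := by
  rw [betaB_comm, betaB_add_left, betaB_comm y x, betaB_comm z x]

lemma betaB_smul_left (a : ℝ) (x y : Vd d) :
    betaB d (a • x) y = a * betaB d x y := by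
  unfold betaB; rw [Finset.mul_sum]; congr 1; funext j
  simp [Pi.smul_apply, smul_eq_mul]; ring

lemma betaB_smul_right (a : ℝ) (x y : Vd d) :
    betaB d x (a • y) = a * betaB d x y := by
  rw [betaB_comm, betaB_smul_left, betaB_comm y x]

lemma betaB_sub_left (x y z : Vd d) :
    betaB d (x - y) z = betaB d x z - betaB d y z := by
  have : x - y = x + (-1 : ℝ) • y := by funext j; simp; ring
  rw [this, betaB_add_left, betaB_smul_left]; ring

lemma betaB_sub_right (x y z : Vd d) :
    betaB d x (y - z) = betaB d x y - betaB d x z := by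
  rw [betaB_comm, betaB_sub_left, betaB_comm y x, betaB_comm z x]

/-- vector supported at one index -/
def sv (d : ℕ) (i : Fin (d+1)) (a : ℝ) : Vd d := fun j => if j = i then a else 0

lemma evec_eq_sv (i : Fin (d+1)) : evec d i = sv d i 1 := rfl

lemma betaB_sv_right (x : Vd d) (i : Fin (d+1)) (a : ℝ) :
    betaB d x (sv d i a) = cf d i * x i * a := by
  unfold betaB sv
  rw [Finset.sum_eq_single i]
  · simp only [if_pos rfl]; unfold cf; split_ifs <;> ring
  · intro b _ hb; simp [hb]
  · simp

lemma betaB_sv_left (x : Vd d) (i : Fin (d+1)) (a : ℝ) :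
    betaB d (sv d i a) x = cf d i * x i * a := by
  rw [betaB_comm, betaB_sv_right]

lemma sv_add_eq (i k : Fin (d+1)) (hik : i ≠ k) (a b : ℝ) (j : Fin (d+1)) :
    (sv d i a + sv d k b) j = if j = i then a else if j = k then b else 0 := by
  unfold sv
  by_cases h1 : j = i
  · subst h1
    have : j ≠ k := hik
    simp [Pi.add_apply, this]
  · by_cases h2 : j = k
    · subst h2
      have : j ≠ i := h1
      simp [Pi.add_apply, this]
    · simp [Pi.add_apply, h1, h2]

/-- β is ≤ 0 on vectors vanishing at coordinates 0 and 1 -/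
lemma betaB_nonpos (hd : 2 ≤ d) (z : Vd d) (h0 : z 0 = 0) (h1 : z 1 = 0) :
    betaB d z z ≤ 0 := by
  unfold betaB
  apply Finset.sum_nonpos
  intro j _
  by_cases h : (j : ℕ) ≤ 1
  · have hj : (j : ℕ) = 0 ∨ (j : ℕ) = 1 := by omega
    have : z j = 0 := by
      rcases hj with hj | hj
      · rw [(eq0_iff hd j).2 hj]; exact h0
      · rw [(eq1_iff hd j).2 hj]; exact h1
    simp [this]
  · simp only [if_neg h]
    nlinarith [sq_nonneg (z j)]

end Stmt11
namespace Stmt11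

variable {d : ℕ}

lemma ne01 (hd : 2 ≤ d) : (0 : Fin (d+1)) ≠ 1 := by
  intro h; have := congrArg Fin.val h; rw [val0, val1 hd] at this; omega
lemma ne02 (hd : 2 ≤ d) : (0 : Fin (d+1)) ≠ 2 := by
  intro h; have := congrArg Fin.val h; rw [val0, val2 hd] at this; omega
lemma ne12 (hd : 2 ≤ d) : (1 : Fin (d+1)) ≠ 2 := by
  intro h; have := congrArg Fin.val h; rw [val1 hd, val2 hd] at this; omega

lemma mat_ext_mulVec {A B : Mat d} (h : ∀ v : Vd d, A.mulVec v = B.mulVec v) : A = B := by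
  ext i j
  have := congrFun (h (Pi.single j 1)) i
  rw [Matrix.mulVec_single, Matrix.mulVec_single] at this
  simpa using this

lemma one_mem_Obeta : (1 : Mat d) ∈ Obeta d :=
  ⟨isUnit_one, fun x y => by rw [Matrix.one_mulVec, Matrix.one_mulVec]⟩

lemma mul_mem_Obeta {A B : Mat d} (hA : A ∈ Obeta d) (hB : B ∈ Obeta d) :
    A * B ∈ Obeta d := by
  refine ⟨hA.1.mul hB.1, fun x y => ?_⟩
  rw [← Matrix.mulVec_mulVec, ← Matrix.mulVec_mulVec, hA.2, hB.2]

lemma mulVec_apply (A : Mat d) (v : Vd d) (j : Fin (d+1)) :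
    A.mulVec v j = ∑ k, A j k * v k := rfl

lemma hmat_entry (i k : Fin (d+1)) :
    hmat d i k = if ((i:ℕ) = 1 ∧ (k:ℕ) = 2) ∨ ((i:ℕ) = 2 ∧ (k:ℕ) = 1) then (1:ℝ) else 0 := rfl

lemma hmat_mulVec (hd : 2 ≤ d) (z : Vd d) :
    (hmat d).mulVec z = sv d 1 (z 2) + sv d 2 (z 1) := by
  funext j
  rw [sv_add_eq _ _ (ne12 hd), mulVec_apply]
  by_cases hj1 : j = (1 : Fin (d+1))
  · subst hj1
    rw [if_pos rfl, Finset.sum_eq_single (2 : Fin (d+1))]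
    · rw [hmat_entry, if_pos (Or.inl ⟨val1 hd, val2 hd⟩), one_mul]
    · intro k _ hk
      have hk2 : (k : ℕ) ≠ 2 := fun h => hk ((eq2_iff hd k).2 h)
      rw [hmat_entry, if_neg, zero_mul]
      rintro (⟨-, h⟩ | ⟨h, -⟩)
      · exact hk2 h
      · rw [val1 hd] at h; omega
    · simp
  · rw [if_neg hj1]
    by_cases hj2 : j = (2 : Fin (d+1))
    · subst hj2
      rw [if_pos rfl, Finset.sum_eq_single (1 : Fin (d+1))]
      · rw [hmat_entry, if_pos (Or.inr ⟨val2 hd, val1 hd⟩), one_mul]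
      · intro k _ hk
        have hk1 : (k : ℕ) ≠ 1 := fun h => hk ((eq1_iff hd k).2 h)
        rw [hmat_entry, if_neg, zero_mul]
        rintro (⟨h, -⟩ | ⟨-, h⟩)
        · rw [val2 hd] at h; omega
        · exact hk1 h
      · simp
    · rw [if_neg hj2]
      apply Finset.sum_eq_zero
      intro k _
      have h1 : (j : ℕ) ≠ 1 := fun h => hj1 ((eq1_iff hd j).2 h)
      have h2 : (j : ℕ) ≠ 2 := fun h => hj2 ((eq2_iff hd j).2 h)
      rw [hmat_entry, if_neg, zero_mul]
      rintro (⟨h, -⟩ | ⟨h, -⟩)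
      · exact h1 h
      · exact h2 h

/-- `J z = (−z₁, z₀, 0, …, 0)`, a globally positive section of the normal bundle. -/
def Jfun (d : ℕ) (z : Vd d) : Vd d := sv d 0 (-(z 1)) + sv d 1 (z 0)

lemma sv_apply_self (i : Fin (d+1)) (a : ℝ) : sv d i a i = a := by simp [sv]
lemma sv_apply_ne (i j : Fin (d+1)) (h : j ≠ i) (a : ℝ) : sv d i a j = 0 := by simp [sv, h]

lemma Jfun_apply0 (hd : 2 ≤ d) (z : Vd d) : Jfun d z 0 = -(z 1) := by
  unfold Jfun; rw [Pi.add_apply, sv_apply_self, sv_apply_ne _ _ (ne01 hd), add_zero]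
lemma Jfun_apply1 (hd : 2 ≤ d) (z : Vd d) : Jfun d z 1 = z 0 := by
  unfold Jfun; rw [Pi.add_apply, sv_apply_self, sv_apply_ne _ _ (ne01 hd).symm, zero_add]
lemma Jfun_apply2 (hd : 2 ≤ d) (z : Vd d) : Jfun d z 2 = 0 := by
  unfold Jfun
  rw [Pi.add_apply, sv_apply_ne _ _ (ne02 hd).symm, sv_apply_ne _ _ (ne12 hd).symm, add_zero]

lemma betaB_hz_Jz (hd : 2 ≤ d) (z w : Vd d) :
    betaB d ((hmat d).mulVec z) (Jfun d w) = w 0 * z 2 := by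
  rw [hmat_mulVec hd, betaB_add_left, betaB_sv_left, betaB_sv_left,
    Jfun_apply1 hd, Jfun_apply2 hd, cf1 hd, cf2 hd]
  ring

lemma betaB_z_hz (hd : 2 ≤ d) (z : Vd d) : betaB d z ((hmat d).mulVec z) = 0 := by
  rw [hmat_mulVec hd, betaB_add_right, betaB_sv_right, betaB_sv_right, cf1 hd, cf2 hd]
  ring

lemma betaB_hz_hz (hd : 2 ≤ d) (z : Vd d) :
    betaB d ((hmat d).mulVec z) ((hmat d).mulVec z) = z 2 ^ 2 - z 1 ^ 2 := by
  rw [hmat_mulVec hd, betaB_add_right, betaB_sv_right, betaB_sv_right, cf1 hd, cf2 hd,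
    Pi.add_apply, Pi.add_apply, sv_apply_self, sv_apply_self,
    sv_apply_ne _ _ (ne12 hd).symm, sv_apply_ne _ _ (ne12 hd)]
  ring

lemma betaB_z_Jz (hd : 2 ≤ d) (z : Vd d) : betaB d z (Jfun d z) = 0 := by
  unfold Jfun
  rw [betaB_add_right, betaB_sv_right, betaB_sv_right, cf0 hd, cf1 hd]
  ring

lemma evec_apply_self (i : Fin (d+1)) : evec d i i = 1 := if_pos rfl
lemma evec_apply_ne {i j : Fin (d+1)} (h : j ≠ i) : evec d i j = 0 := if_neg h

lemma Jfun_evec0 (hd : 2 ≤ d) : Jfun d (evec d 0) = evec d 1 := by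
  funext j
  unfold Jfun
  rw [Pi.add_apply]
  by_cases h0 : j = (0 : Fin (d+1))
  · subst h0
    rw [sv_apply_self, sv_apply_ne _ _ (ne01 hd), evec_apply_ne (ne01 hd),
      evec_apply_ne (ne01 hd).symm]
    ring
  · by_cases h1 : j = (1 : Fin (d+1))
    · subst h1
      rw [sv_apply_ne _ _ (ne01 hd).symm, sv_apply_self, evec_apply_self, evec_apply_self]
      ring
    · rw [sv_apply_ne _ _ h0, sv_apply_ne _ _ h1, evec_apply_ne h1]
      ring

lemma betaB_evec1_right (hd : 2 ≤ d) (v : Vd d) : betaB d v (evec d 1) = v 1 := by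
  rw [evec_eq_sv, betaB_sv_right, cf1 hd]; ring

end Stmt11
namespace Stmt11

variable {d : ℕ}

lemma betaB_Jy_Jy (hd : 2 ≤ d) (y : Vd d) :
    betaB d (Jfun d y) (Jfun d y) = y 0 ^ 2 + y 1 ^ 2 := by
  unfold Jfun
  rw [betaB_add_right, betaB_sv_right, betaB_sv_right, cf0 hd, cf1 hd,
    Pi.add_apply, Pi.add_apply, sv_apply_self, sv_apply_self,
    sv_apply_ne _ _ (ne01 hd).symm, sv_apply_ne _ _ (ne01 hd)]
  ring

lemma betaB_Jy_y (hd : 2 ≤ d) (y : Vd d) : betaB d (Jfun d y) y = 0 := by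
  rw [betaB_comm]; exact betaB_z_Jz hd y

lemma cf_neg (hd : 2 ≤ d) (j : Fin (d+1)) (h0 : j ≠ 0) (h1 : j ≠ 1) : cf d j = -1 := by
  unfold cf
  rw [if_neg]
  intro h
  have hv0 : (j:ℕ) ≠ 0 := fun hh => h0 ((eq0_iff hd j).2 hh)
  have hv1 : (j:ℕ) ≠ 1 := fun hh => h1 ((eq1_iff hd j).2 hh)
  omega

lemma norm01_ge_one (hd : 2 ≤ d) (y : Vd d) (hy : betaB d y y = 1) :
    1 ≤ y 0 ^ 2 + y 1 ^ 2 := by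
  have hle : betaB d y y ≤
      ∑ j : Fin (d+1), ((if j = (0:Fin (d+1)) then y 0 ^ 2 else 0)
        + (if j = (1:Fin (d+1)) then y 1 ^ 2 else 0)) := by
    rw [betaB_def]
    apply Finset.sum_le_sum
    intro j _
    by_cases h0 : j = 0
    · subst h0
      rw [if_pos rfl, if_neg (ne01 hd), cf0 hd]
      apply le_of_eq; ring
    · by_cases h1 : j = 1
      · subst h1
        rw [if_neg h0, if_pos rfl, cf1 hd]
        apply le_of_eq; ring
      · rw [if_neg h0, if_neg h1, cf_neg hd j h0 h1]
        nlinarith [sq_nonneg (y j)]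
  rw [Finset.sum_add_distrib, Finset.sum_ite_eq' Finset.univ, Finset.sum_ite_eq' Finset.univ,
    if_pos (Finset.mem_univ _), if_pos (Finset.mem_univ _), hy] at hle
  exact hle

/-- nonvanishing of the pairing with the global section `J` -/
lemma betaB_J_ne_zero (hd : 2 ≤ d) (y w : Vd d) (hy : betaB d y y = 1)
    (hyw : betaB d y w = 0) (hw : 0 < betaB d w w) :
    betaB d w (Jfun d y) ≠ 0 := by
  intro hcon
  set n : ℝ := y 0 ^ 2 + y 1 ^ 2 with hn
  have hn1 : 1 ≤ n := norm01_ge_one hd y hy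
  have hnpos : 0 < n := by linarith
  set a : ℝ := (w 0 * y 0 + w 1 * y 1) / n with ha
  set b : ℝ := (-(w 0) * y 1 + w 1 * y 0) / n with hb
  set z : Vd d := w - a • y - b • Jfun d y with hz
  have hz0 : z 0 = 0 := by
    simp only [hz, Pi.sub_apply, Pi.smul_apply, smul_eq_mul]
    rw [Jfun_apply0 hd, ha, hb]
    field_simp
    ring
  have hz1 : z 1 = 0 := by
    simp only [hz, Pi.sub_apply, Pi.smul_apply, smul_eq_mul]
    rw [Jfun_apply1 hd, ha, hb]
    field_simp
    ring
  have hzz := betaB_nonpos hd z hz0 hz1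
  have hwy : betaB d w y = 0 := by rw [betaB_comm]; exact hyw
  have hyJ : betaB d y (Jfun d y) = 0 := betaB_z_Jz hd y
  have hJy : betaB d (Jfun d y) y = 0 := betaB_Jy_y hd y
  have hJw : betaB d (Jfun d y) w = 0 := by rw [betaB_comm]; exact hcon
  have hJJ : betaB d (Jfun d y) (Jfun d y) = n := betaB_Jy_Jy hd y
  have hexp : betaB d z z = betaB d w w + a ^ 2 + b ^ 2 * n := by
    simp only [hz, betaB_sub_left, betaB_sub_right, betaB_smul_left, betaB_smul_right,
      hwy, hyw, hyJ, hJy, hJw, hcon, hJJ, hy]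
    ring
  nlinarith [hzz, hexp, sq_nonneg a, sq_nonneg b]

/-- entries of matrices are continuous -/
lemma cont_entry (j k : Fin (d+1)) : Continuous fun A : Mat d => A j k :=
  (continuous_apply k).comp (continuous_apply j)

lemma cont_mulVec (u : Vd d) (j : Fin (d+1)) :
    Continuous fun A : Mat d => A.mulVec u j := by
  simp only [mulVec_apply]
  exact continuous_finset_sum _ fun k _ => (cont_entry j k).mul continuous_const

lemma cont_F (x v : Vd d) :
    Continuous fun A : Mat d => betaB d (A.mulVec v) (Jfun d (A.mulVec x)) := by
  unfold betaB
  apply continuous_finset_sum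
  intro j _
  apply Continuous.mul
  · exact continuous_const.mul (cont_mulVec v j)
  · unfold Jfun sv
    simp only [Pi.add_apply]
    apply Continuous.add
    · by_cases h : j = (0 : Fin (d+1)) <;> simp only [h, if_pos, if_neg, if_true, if_false]
      · exact (cont_mulVec x 1).neg
      · exact continuous_const
    · by_cases h : j = (1 : Fin (d+1)) <;> simp only [h, if_pos, if_neg, if_true, if_false]
      · exact cont_mulVec x 0
      · exact continuous_const

lemma one_mem_Gset : (1 : Mat d) ∈ Gset d := mem_connectedComponentIn one_mem_Obeta

lemma Gset_sub_Obeta : Gset d ⊆ Obeta d := connectedComponentIn_subset _ _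

/-- the central sign-invariance lemma -/
lemma sign_invariance (hd : 2 ≤ d) (x v : Vd d) (hx : betaB d x x = 1)
    (hxv : betaB d x v = 0) (hv : 0 < betaB d v v) {g : Mat d} (hg : g ∈ Gset d) :
    (0 < betaB d (g.mulVec v) (Jfun d (g.mulVec x)) ↔ 0 < betaB d v (Jfun d x)) := by
  set F : Mat d → ℝ := fun A => betaB d (A.mulVec v) (Jfun d (A.mulVec x)) with hF
  have hcont : Continuous F := cont_F x v
  have hne : ∀ A ∈ Obeta d, F A ≠ 0 := by
    intro A hA
    apply betaB_J_ne_zero hd (A.mulVec x) (A.mulVec v)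
    · rw [hA.2]; exact hx
    · rw [hA.2]; exact hxv
    · rw [hA.2]; exact hv
  have himg : IsPreconnected (F '' Gset d) :=
    isPreconnected_connectedComponentIn.image F hcont.continuousOn
  have key : ∀ A B : Mat d, A ∈ Gset d → B ∈ Gset d → F A ≤ 0 → 0 ≤ F B → False := by
    intro A B hA hB hFA hFB
    have h0 : (0 : ℝ) ∈ Set.Icc (F A) (F B) := ⟨hFA, hFB⟩
    have := himg.Icc_subset ⟨A, hA, rfl⟩ ⟨B, hB, rfl⟩ h0
    obtain ⟨C, hC, hC0⟩ := this
    exact hne C (Gset_sub_Obeta hC) hC0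
  have hF1 : F 1 = betaB d v (Jfun d x) := by
    rw [hF]; simp only [Matrix.one_mulVec]
  constructor
  · intro h
    by_contra h'
    push_neg at h'
    rw [← hF1] at h'
    exact key 1 g one_mem_Gset hg h' (le_of_lt h)
  · intro h
    by_contra h'
    push_neg at h'
    rw [← hF1] at h
    exact key g 1 hg one_mem_Gset h' (le_of_lt h)

end Stmt11
namespace Stmt11

variable {d : ℕ}

/-- existence of a continuous path from 1 inside `O(β)` -/
def GPath (d : ℕ) (g : Mat d) : Prop :=
  ∃ γ : ℝ → Mat d, ContinuousOn γ (Set.Icc 0 1) ∧ (∀ s ∈ Set.Icc (0:ℝ) 1, γ s ∈ Obeta d) ∧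
    γ 0 = 1 ∧ γ 1 = g

lemma GPath.mem_Gset {g : Mat d} (h : GPath d g) : g ∈ Gset d := by
  obtain ⟨γ, hc, hm, h0, h1⟩ := h
  have himg : IsPreconnected (γ '' Set.Icc 0 1) := isPreconnected_Icc.image γ hc
  have hsub : γ '' Set.Icc 0 1 ⊆ connectedComponentIn (Obeta d) 1 := by
    apply himg.subset_connectedComponentIn
    · exact ⟨0, ⟨le_refl 0, zero_le_one⟩, h0⟩
    · rintro _ ⟨s, hs, rfl⟩; exact hm s hs
  exact hsub ⟨1, ⟨zero_le_one, le_refl 1⟩, h1⟩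

lemma GPath.mul {g₁ g₂ : Mat d} (h1 : GPath d g₁) (h2 : GPath d g₂) : GPath d (g₁ * g₂) := by
  obtain ⟨γ₁, hc1, hm1, h01, h11⟩ := h1
  obtain ⟨γ₂, hc2, hm2, h02, h12⟩ := h2
  refine ⟨fun s => γ₁ s * γ₂ s, ?_, fun s hs => mul_mem_Obeta (hm1 s hs) (hm2 s hs),
    by show γ₁ 0 * γ₂ 0 = 1; rw [h01, h02, one_mul],
    by show γ₁ 1 * γ₂ 1 = g₁ * g₂; rw [h11, h12]⟩
  apply continuousOn_pi.2; intro i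
  apply continuousOn_pi.2; intro j
  have hrw : (fun s => (γ₁ s * γ₂ s) i j) = fun s => ∑ k, γ₁ s i k * γ₂ s k j := by
    funext s; rw [Matrix.mul_apply]
  rw [hrw]
  apply continuousOn_finset_sum
  intro k _
  exact ((cont_entry i k).comp_continuousOn hc1).mul ((cont_entry k j).comp_continuousOn hc2)

/-- two-by-two block matrix acting in coordinates `p, q` -/
def tb (d : ℕ) (p q : Fin (d+1)) (a b c e : ℝ) : Mat d :=
  Matrix.of fun i j =>
    if i = p then (if j = p then a else if j = q then b else 0)
    else if i = q then (if j = p then c else if j = q then e else 0)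
    else if i = j then 1 else 0

lemma tb_mulVec {p q : Fin (d+1)} (hpq : p ≠ q) (a b c e : ℝ) (v : Vd d) :
    (tb d p q a b c e).mulVec v = fun i =>
      if i = p then a * v p + b * v q else if i = q then c * v p + e * v q else v i := by
  funext i
  rw [mulVec_apply]
  by_cases hip : i = p
  · rw [if_pos hip]
    trans (∑ j : Fin (d+1), ((if j = p then a * v j else 0) + (if j = q then b * v j else 0)))
    · apply Finset.sum_congr rfl
      intro j _
      unfold tb
      rw [Matrix.of_apply, if_pos hip]
      by_cases hjp : j = p
      · have hjq : j ≠ q := by rw [hjp]; exact hpq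
        rw [if_pos hjp, if_pos hjp, if_neg hjq, add_zero, hjp]
      · rw [if_neg hjp, if_neg hjp]
        by_cases hjq : j = q
        · rw [if_pos hjq, if_pos hjq, zero_add, hjq]
        · rw [if_neg hjq, if_neg hjq, zero_mul, add_zero]
    · rw [Finset.sum_add_distrib, Finset.sum_ite_eq' Finset.univ p (fun j => a * v j),
        Finset.sum_ite_eq' Finset.univ q (fun j => b * v j),
        if_pos (Finset.mem_univ p), if_pos (Finset.mem_univ q)]
  · rw [if_neg hip]
    by_cases hiq : i = q
    · rw [if_pos hiq]
      trans (∑ j : Fin (d+1), ((if j = p then c * v j else 0) + (if j = q then e * v j else 0)))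
      · apply Finset.sum_congr rfl
        intro j _
        unfold tb
        rw [Matrix.of_apply, if_neg hip, if_pos hiq]
        by_cases hjp : j = p
        · have hjq : j ≠ q := by rw [hjp]; exact hpq
          rw [if_pos hjp, if_pos hjp, if_neg hjq, add_zero, hjp]
        · rw [if_neg hjp, if_neg hjp]
          by_cases hjq : j = q
          · rw [if_pos hjq, if_pos hjq, zero_add, hjq]
          · rw [if_neg hjq, if_neg hjq, zero_mul, add_zero]
      · rw [Finset.sum_add_distrib, Finset.sum_ite_eq' Finset.univ p (fun j => c * v j),
          Finset.sum_ite_eq' Finset.univ q (fun j => e * v j),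
          if_pos (Finset.mem_univ p), if_pos (Finset.mem_univ q)]
    · rw [if_neg hiq]
      trans (∑ j : Fin (d+1), if i = j then v j else 0)
      · apply Finset.sum_congr rfl
        intro j _
        unfold tb
        rw [Matrix.of_apply, if_neg hip, if_neg hiq]
        by_cases hij : i = j
        · rw [if_pos hij, if_pos hij, one_mul]
        · rw [if_neg hij, if_neg hij, zero_mul]
      · rw [Finset.sum_ite_eq Finset.univ i v, if_pos (Finset.mem_univ i)]

lemma tb_mul_tb {p q : Fin (d+1)} (hpq : p ≠ q) (a b c e a' b' c' e' : ℝ) :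
    tb d p q a b c e * tb d p q a' b' c' e' =
      tb d p q (a*a'+b*c') (a*b'+b*e') (c*a'+e*c') (c*b'+e*e') := by
  apply mat_ext_mulVec
  intro v
  rw [← Matrix.mulVec_mulVec, tb_mulVec hpq, tb_mulVec hpq, tb_mulVec hpq]
  funext i
  by_cases hip : i = p
  · subst hip
    simp only [if_pos rfl, if_neg hpq, if_neg hpq.symm, eq_self_iff_true, if_true]
    ring
  · by_cases hiq : i = q
    · subst hiq
      simp only [if_pos rfl, if_neg hpq, if_neg hpq.symm, if_neg hip, eq_self_iff_true, if_true]
      ring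
    · simp only [if_neg hip, if_neg hiq]

lemma tb_one {p q : Fin (d+1)} (hpq : p ≠ q) : tb d p q 1 0 0 1 = 1 := by
  apply mat_ext_mulVec
  intro v
  rw [tb_mulVec hpq, Matrix.one_mulVec]
  funext i
  by_cases hip : i = p
  · rw [if_pos hip, hip]; ring
  · rw [if_neg hip]
    by_cases hiq : i = q
    · rw [if_pos hiq, hiq]; ring
    · rw [if_neg hiq]

lemma betaB_tb {p q : Fin (d+1)} (hpq : p ≠ q) {a b c e : ℝ}
    (hrel1 : cf d p * a^2 + cf d q * c^2 = cf d p)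
    (hrel2 : cf d p * b^2 + cf d q * e^2 = cf d q)
    (hrel3 : cf d p * (a*b) + cf d q * (c*e) = 0)
    (v w : Vd d) :
    betaB d ((tb d p q a b c e).mulVec v) ((tb d p q a b c e).mulVec w) = betaB d v w := by
  rw [tb_mulVec hpq, tb_mulVec hpq, betaB_def, betaB_def]
  have hterm : ∀ j : Fin (d+1),
      cf d j * (if j = p then a * v p + b * v q else if j = q then c * v p + e * v q else v j)
        * (if j = p then a * w p + b * w q else if j = q then c * w p + e * w q else w j)
      = cf d j * v j * w j
        + ((if j = p then cf d p * ((a * v p + b * v q) * (a * w p + b * w q)) - cf d p * v p * w p else 0)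
        + (if j = q then cf d q * ((c * v p + e * v q) * (c * w p + e * w q)) - cf d q * v q * w q else 0)) := by
    intro j
    by_cases hjp : j = p
    · have hjq : j ≠ q := by rw [hjp]; exact hpq
      rw [if_pos hjp, if_pos hjp, if_pos hjp, if_neg hjq, hjp]; ring
    · rw [if_neg hjp, if_neg hjp, if_neg hjp]
      by_cases hjq : j = q
      · rw [if_pos hjq, if_pos hjq, if_pos hjq, hjq]; ring
      · rw [if_neg hjq, if_neg hjq, if_neg hjq]; ring
  rw [Finset.sum_congr rfl (fun j _ => hterm j), Finset.sum_add_distrib, Finset.sum_add_distrib,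
    Finset.sum_ite_eq' Finset.univ p, Finset.sum_ite_eq' Finset.univ q,
    if_pos (Finset.mem_univ p), if_pos (Finset.mem_univ q)]
  have : cf d p * ((a * v p + b * v q) * (a * w p + b * w q)) - cf d p * v p * w p
      + (cf d q * ((c * v p + e * v q) * (c * w p + e * w q)) - cf d q * v q * w q) = 0 := by
    linear_combination (v p * w p) * hrel1 + (v q * w q) * hrel2 + (v p * w q + v q * w p) * hrel3
  rw [this, add_zero]

lemma cont_tb {p q : Fin (d+1)} {f g h k : ℝ → ℝ} (hf : Continuous f) (hg : Continuous g)
    (hh : Continuous h) (hk : Continuous k) :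
    Continuous fun s => tb d p q (f s) (g s) (h s) (k s) := by
  apply continuous_matrix
  intro i j
  unfold tb
  simp only [Matrix.of_apply]
  split_ifs <;> first | exact hf | exact hg | exact hh | exact hk | exact continuous_const

/-- hyperbolic block `p` (plus) `q` (minus) -/
lemma isUnit_of_mul_eq_one_mat {A B : Mat d} (h : A * B = 1) : IsUnit A :=
  ⟨⟨A, B, h, mul_eq_one_comm.mp h⟩, rfl⟩

lemma tb_hyp_mem_Obeta {p q : Fin (d+1)} (hpq : p ≠ q) (hp : cf d p = 1) (hq : cf d q = -1)
    {a b : ℝ} (hab : a^2 - b^2 = 1) : tb d p q a b b a ∈ Obeta d := by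
  constructor
  · apply isUnit_of_mul_eq_one_mat (B := tb d p q a (-b) (-b) a)
    rw [tb_mul_tb hpq]
    rw [show a*a + b*(-b) = 1 by nlinarith, show a*(-b) + b*a = 0 by ring,
      show b*a + a*(-b) = 0 by ring, show b*(-b) + a*a = 1 by nlinarith]
    exact tb_one hpq
  · intro v w
    apply betaB_tb hpq <;> rw [hp, hq] <;> nlinarith

/-- rotation block, both coordinates plus -/
lemma tb_rot_mem_Obeta {p q : Fin (d+1)} (hpq : p ≠ q) (hp : cf d p = 1) (hq : cf d q = 1)
    {a b : ℝ} (hab : a^2 + b^2 = 1) : tb d p q a b (-b) a ∈ Obeta d := by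
  constructor
  · apply isUnit_of_mul_eq_one_mat (B := tb d p q a (-b) b a)
    rw [tb_mul_tb hpq]
    rw [show a*a + b*b = 1 by nlinarith, show a*(-b) + b*a = 0 by ring,
      show (-b)*a + a*b = 0 by ring, show (-b)*(-b) + a*a = 1 by nlinarith]
    exact tb_one hpq
  · intro v w
    apply betaB_tb hpq <;> rw [hp, hq] <;> nlinarith

lemma gpath_hyp {p q : Fin (d+1)} (hpq : p ≠ q) (hp : cf d p = 1) (hq : cf d q = -1) (τ : ℝ) :
    GPath d (tb d p q (Real.cosh τ) (Real.sinh τ) (Real.sinh τ) (Real.cosh τ)) := by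
  refine ⟨fun s => tb d p q (Real.cosh (s*τ)) (Real.sinh (s*τ)) (Real.sinh (s*τ)) (Real.cosh (s*τ)),
    ?_, fun s _ => tb_hyp_mem_Obeta hpq hp hq ?_, ?_, by norm_num⟩
  · apply Continuous.continuousOn
    apply cont_tb <;>
      first
      | exact Real.continuous_cosh.comp (continuous_id.mul continuous_const)
      | exact Real.continuous_sinh.comp (continuous_id.mul continuous_const)
  · have := Real.cosh_sq_sub_sinh_sq (s*τ)
    nlinarith
  · show tb d p q (Real.cosh (0*τ)) (Real.sinh (0*τ)) (Real.sinh (0*τ)) (Real.cosh (0*τ)) = 1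
    rw [zero_mul, Real.cosh_zero, Real.sinh_zero]
    exact tb_one hpq

lemma gpath_rot {p q : Fin (d+1)} (hpq : p ≠ q) (hp : cf d p = 1) (hq : cf d q = 1) (θ : ℝ) :
    GPath d (tb d p q (Real.cos θ) (Real.sin θ) (-Real.sin θ) (Real.cos θ)) := by
  refine ⟨fun s => tb d p q (Real.cos (s*θ)) (Real.sin (s*θ)) (-Real.sin (s*θ)) (Real.cos (s*θ)),
    ?_, fun s _ => tb_rot_mem_Obeta hpq hp hq ?_, ?_, by norm_num⟩
  · apply Continuous.continuousOn
    apply cont_tb <;>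
      first
      | exact Real.continuous_cos.comp (continuous_id.mul continuous_const)
      | exact Real.continuous_sin.comp (continuous_id.mul continuous_const)
      | exact (Real.continuous_sin.comp (continuous_id.mul continuous_const)).neg
  · have := Real.sin_sq_add_cos_sq (s*θ)
    nlinarith
  · show tb d p q (Real.cos (0*θ)) (Real.sin (0*θ)) (-Real.sin (0*θ)) (Real.cos (0*θ)) = 1
    rw [zero_mul, Real.cos_zero, Real.sin_zero, neg_zero]
    exact tb_one hpq

end Stmt11
namespace Stmt11

variable {d : ℕ}

/-- the β-reflection through the line spanned by `w` -/
def reflM (d : ℕ) (w : Vd d) : Mat d :=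
  Matrix.of fun i j => (2 / betaB d w w) * w i * (cf d j * w j) - (if i = j then 1 else 0)

lemma reflM_mulVec (w v : Vd d) :
    (reflM d w).mulVec v = ((2 * betaB d w v / betaB d w w) • w) - v := by
  funext i
  rw [mulVec_apply]
  have hterm : ∀ j : Fin (d+1), reflM d w i j * v j =
      (2 / betaB d w w) * w i * (cf d j * w j * v j) - (if i = j then v j else 0) := by
    intro j
    unfold reflM
    rw [Matrix.of_apply]
    by_cases hij : i = j
    · rw [if_pos hij, if_pos hij]; ring
    · rw [if_neg hij, if_neg hij]; ring
  rw [Finset.sum_congr rfl (fun j _ => hterm j), Finset.sum_sub_distrib, ← Finset.mul_sum,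
    Finset.sum_ite_eq Finset.univ i v, if_pos (Finset.mem_univ i), ← betaB_def]
  simp only [Pi.sub_apply, Pi.smul_apply, smul_eq_mul]
  ring

lemma reflM_mulVec_invol (w : Vd d) (hw : betaB d w w ≠ 0) (v : Vd d) :
    (reflM d w).mulVec ((reflM d w).mulVec v) = v := by
  rw [reflM_mulVec, reflM_mulVec]
  have hexp : betaB d w ((2 * betaB d w v / betaB d w w) • w - v) = betaB d w v := by
    rw [betaB_sub_right, betaB_smul_right]
    field_simp
    ring
  rw [hexp]
  funext i
  simp only [Pi.sub_apply, Pi.smul_apply, smul_eq_mul]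
  ring

lemma reflM_mul_self (w : Vd d) (hw : betaB d w w ≠ 0) : reflM d w * reflM d w = 1 := by
  apply mat_ext_mulVec
  intro v
  rw [← Matrix.mulVec_mulVec, reflM_mulVec_invol w hw, Matrix.one_mulVec]

lemma reflM_mem_Obeta (w : Vd d) (hw : betaB d w w ≠ 0) : reflM d w ∈ Obeta d := by
  constructor
  · exact isUnit_of_mul_eq_one_mat (reflM_mul_self w hw)
  · intro x y
    rw [reflM_mulVec, reflM_mulVec]
    simp only [betaB_sub_left, betaB_sub_right, betaB_smul_left, betaB_smul_right]
    rw [betaB_comm w y, betaB_comm x w]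
    field_simp
    ring

/-- continuity of a family of reflections with nonvanishing norm -/
lemma cont_reflM {S : Set ℝ} {w : ℝ → Vd d} (hw : ∀ i, ContinuousOn (fun s => w s i) S)
    (hq : ∀ s ∈ S, betaB d (w s) (w s) ≠ 0) :
    ContinuousOn (fun s => reflM d (w s)) S := by
  have hcq : ContinuousOn (fun s => betaB d (w s) (w s)) S := by
    simp only [betaB_def]
    apply continuousOn_finset_sum
    intro j _
    exact (continuousOn_const.mul (hw j)).mul (hw j)
  apply continuousOn_pi.2; intro i
  apply continuousOn_pi.2; intro j
  show ContinuousOn (fun s => (2 / betaB d (w s) (w s)) * w s i * (cf d j * w s j) - _) S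
  apply ContinuousOn.sub
  · apply ContinuousOn.mul
    · apply ContinuousOn.mul
      · exact ContinuousOn.div continuousOn_const hcq hq
      · exact hw i
    · exact continuousOn_const.mul (hw j)
  · exact continuousOn_const

end Stmt11
namespace Stmt11

variable {d : ℕ}

lemma sv_zero (i : Fin (d+1)) : sv d i 0 = 0 := by
  funext j; unfold sv; split_ifs <;> rfl

lemma sv_smul (i : Fin (d+1)) (a c : ℝ) : a • sv d i c = sv d i (a * c) := by
  funext j; unfold sv; simp only [Pi.smul_apply, smul_eq_mul]
  split_ifs <;> ring

lemma sv_neg (i : Fin (d+1)) (c : ℝ) : -(sv d i c) = sv d i (-c) := by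
  funext j; unfold sv; simp only [Pi.neg_apply]
  split_ifs <;> ring

lemma gpath_one : GPath d 1 :=
  ⟨fun _ => 1, continuousOn_const, fun _ _ => one_mem_Obeta, rfl, rfl⟩

lemma tb_mulVec_p {p q : Fin (d+1)} (hpq : p ≠ q) (a b c e : ℝ) (v : Vd d) :
    (tb d p q a b c e).mulVec v p = a * v p + b * v q := by
  rw [tb_mulVec hpq]
  show (if p = p then a * v p + b * v q else if p = q then c * v p + e * v q else v p) = _
  rw [if_pos rfl]

lemma tb_mulVec_q {p q : Fin (d+1)} (hpq : p ≠ q) (a b c e : ℝ) (v : Vd d) :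
    (tb d p q a b c e).mulVec v q = c * v p + e * v q := by
  rw [tb_mulVec hpq]
  show (if q = p then a * v p + b * v q else if q = q then c * v p + e * v q else v q) = _
  rw [if_neg hpq.symm, if_pos rfl]

lemma tb_mulVec_other {p q i : Fin (d+1)} (hpq : p ≠ q) (hip : i ≠ p) (hiq : i ≠ q)
    (a b c e : ℝ) (v : Vd d) : (tb d p q a b c e).mulVec v i = v i := by
  rw [tb_mulVec hpq]
  show (if i = p then a * v p + b * v q else if i = q then c * v p + e * v q else v i) = _
  rw [if_neg hip, if_neg hiq]

lemma tb_mulVec_combo {p q : Fin (d+1)} (hpq : p ≠ q) (a b c e cp cq : ℝ) :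
    (tb d p q a b c e).mulVec (sv d p cp + sv d q cq) =
      sv d p (a * cp + b * cq) + sv d q (c * cp + e * cq) := by
  have hvp : (sv d p cp + sv d q cq) p = cp := by
    rw [Pi.add_apply, sv_apply_self, sv_apply_ne _ _ hpq, add_zero]
  have hvq : (sv d p cp + sv d q cq) q = cq := by
    rw [Pi.add_apply, sv_apply_self, sv_apply_ne _ _ hpq.symm, zero_add]
  funext i
  by_cases hip : i = p
  · subst hip
    rw [tb_mulVec_p hpq, hvp, hvq, Pi.add_apply, sv_apply_self, sv_apply_ne _ _ hpq, add_zero]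
  · by_cases hiq : i = q
    · subst hiq
      rw [tb_mulVec_q hpq, hvp, hvq, Pi.add_apply, sv_apply_self, sv_apply_ne _ _ hpq.symm,
        zero_add]
    · rw [tb_mulVec_other hpq hip hiq, Pi.add_apply, sv_apply_ne _ _ hip, sv_apply_ne _ _ hiq,
        Pi.add_apply, sv_apply_ne _ _ hip, sv_apply_ne _ _ hiq]

lemma comm_h_of_mulVec {A : Mat d}
    (hcomm : ∀ v : Vd d, A.mulVec ((hmat d).mulVec v) = (hmat d).mulVec (A.mulVec v)) :
    A * hmat d = hmat d * A :=
  mat_ext_mulVec fun v => by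
    rw [← Matrix.mulVec_mulVec, ← Matrix.mulVec_mulVec, hcomm]

lemma tb12_comm_h (hd : 2 ≤ d) (a b : ℝ) :
    tb d 1 2 a b b a * hmat d = hmat d * tb d 1 2 a b b a := by
  apply comm_h_of_mulVec
  intro v
  rw [hmat_mulVec hd, tb_mulVec_combo (ne12 hd), hmat_mulVec hd,
    tb_mulVec_p (ne12 hd), tb_mulVec_q (ne12 hd),
    show a * v 2 + b * v 1 = b * v 1 + a * v 2 by ring,
    show b * v 2 + a * v 1 = a * v 1 + b * v 2 by ring]

lemma reflM_comm_h (hd : 2 ≤ d) (w : Vd d) (h1 : w 1 = 0) (h2 : w 2 = 0) :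
    reflM d w * hmat d = hmat d * reflM d w := by
  apply comm_h_of_mulVec
  intro v
  have hworth : betaB d w (sv d 1 (v 2) + sv d 2 (v 1)) = 0 := by
    rw [betaB_add_right, betaB_sv_right, betaB_sv_right, h1, h2]; ring
  rw [hmat_mulVec hd, reflM_mulVec, hworth, reflM_mulVec, hmat_mulVec hd]
  have c2 : ((2 * betaB d w v / betaB d w w) • w - v) 2
      = -(v 2) := by
    simp only [Pi.sub_apply, Pi.smul_apply, smul_eq_mul]; rw [h2]; ring
  have c1 : ((2 * betaB d w v / betaB d w w) • w - v) 1
      = -(v 1) := by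
    simp only [Pi.sub_apply, Pi.smul_apply, smul_eq_mul]; rw [h1]; ring
  rw [c1, c2]
  rw [show (2 * 0 / betaB d w w : ℝ) = 0 by ring, zero_smul, zero_sub, neg_add,
    sv_neg, sv_neg]

/-- vectors β-orthogonal to `w` are negated by the reflection -/
lemma reflM_neg (w v : Vd d) (horth : betaB d w v = 0) :
    (reflM d w).mulVec v = -v := by
  rw [reflM_mulVec, horth, show (2 * 0 / betaB d w w : ℝ) = 0 by ring, zero_smul, zero_sub]

end Stmt11
namespace Stmt11
variable {d : ℕ}
lemma tb_mulVec_sv_other {p q i : Fin (d+1)} (hpq : p ≠ q) (hip : i ≠ p) (hiq : i ≠ q)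
    (a b c e t : ℝ) : (tb d p q a b c e).mulVec (sv d i t) = sv d i t := by
  funext k
  by_cases hkp : k = p
  · subst hkp
    rw [tb_mulVec_p hpq, sv_apply_ne _ _ (Ne.symm hip), sv_apply_ne _ _ (Ne.symm hiq)]
    ring
  · by_cases hkq : k = q
    · subst hkq
      rw [tb_mulVec_q hpq, sv_apply_ne _ _ (Ne.symm hip), sv_apply_ne _ _ (Ne.symm hiq)]
      ring
    · rw [tb_mulVec_other hpq hkp hkq]
end Stmt11
namespace Stmt11

variable {d : ℕ}

lemma contOn_matmul {S : Set ℝ} {f g : ℝ → Mat d} (hf : ContinuousOn f S)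
    (hg : ContinuousOn g S) : ContinuousOn (fun s => f s * g s) S := by
  apply continuousOn_pi.2; intro i
  apply continuousOn_pi.2; intro j
  have hrw : (fun s => (f s * g s) i j) = fun s => ∑ k, f s i k * g s k j := by
    funext s; rw [Matrix.mul_apply]
  rw [hrw]
  apply continuousOn_finset_sum
  intro k _
  exact ((cont_entry i k).comp_continuousOn hf).mul ((cont_entry k j).comp_continuousOn hg)

lemma comm_h_mul {A B : Mat d} (hA : A * hmat d = hmat d * A) (hB : B * hmat d = hmat d * B) :
    (A * B) * hmat d = hmat d * (A * B) := by
  rw [mul_assoc, hB, ← mul_assoc, hA, mul_assoc]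

lemma reflM_smul {a : ℝ} (ha : a ≠ 0) (w : Vd d) : reflM d (a • w) = reflM d w := by
  ext i j
  unfold reflM
  rw [Matrix.of_apply, Matrix.of_apply]
  have hq : betaB d (a • w) (a • w) = a^2 * betaB d w w := by
    rw [betaB_smul_left, betaB_smul_right]; ring
  rw [hq]
  simp only [Pi.smul_apply, smul_eq_mul]
  by_cases h : betaB d w w = 0
  · rw [h, mul_zero, div_zero]
    ring_nf
  · field_simp

lemma L_setup (hd : 2 ≤ d) (y : Vd d) (hy1 : y 1 = 0) (hy2 : y 2 = 0)
    (r ε : ℝ) (hr : 0 < r) (hyy : betaB d y y = r^2) (hε : ε = 1 ∨ ε = -1)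
    (hεy0 : r ≤ ε * y 0) :
    ∃ L Linv : Mat d, GPath d L ∧ GPath d Linv ∧
      L * hmat d = hmat d * L ∧ Linv * hmat d = hmat d * Linv ∧
      (∀ v : Vd d, Linv.mulVec (L.mulVec v) = v) ∧
      L.mulVec y = sv d 0 (ε * r) ∧
      (∀ c0 : ℝ, L.mulVec (sv d 1 c0) = sv d 1 c0) ∧
      (∀ c0 : ℝ, L.mulVec (sv d 2 c0) = sv d 2 c0) := by
  have hε2 : ε^2 = 1 := by rcases hε with h | h <;> rw [h] <;> norm_num
  set e' : Vd d := sv d 0 ε with he'def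
  have he'e' : betaB d e' e' = 1 := by
    rw [he'def, betaB_sv_left, sv_apply_self, cf0 hd]; nlinarith [hε2]
  have he'e'ne : betaB d e' e' ≠ 0 := by rw [he'e']; exact one_ne_zero
  have he'1 : e' 1 = 0 := sv_apply_ne _ _ (ne01 hd).symm ε
  have he'2 : e' 2 = 0 := sv_apply_ne _ _ (ne02 hd).symm ε
  set u : Vd d := r⁻¹ • y with hudef
  have hu1 : u 1 = 0 := by rw [hudef, Pi.smul_apply, hy1, smul_zero]
  have hu2 : u 2 = 0 := by rw [hudef, Pi.smul_apply, hy2, smul_zero]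
  have huu : betaB d u u = 1 := by
    rw [hudef, betaB_smul_left, betaB_smul_right, hyy]
    field_simp
  set c : ℝ := betaB d u e' with hcdef
  have hcval : c = r⁻¹ * (y 0 * ε) := by
    rw [hcdef, hudef, he'def, betaB_smul_left, betaB_sv_right, cf0 hd]; ring
  have hc : 1 ≤ c := by
    rw [hcval, show y 0 * ε = ε * y 0 by ring, show (1:ℝ) = r⁻¹ * r by field_simp]
    exact mul_le_mul_of_nonneg_left hεy0 (le_of_lt (inv_pos.2 hr))
  have he'u : betaB d e' u = c := by rw [betaB_comm]
  set w : Vd d := u + e' with hwdef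
  have hw1 : w 1 = 0 := by rw [hwdef, Pi.add_apply, hu1, he'1, add_zero]
  have hw2 : w 2 = 0 := by rw [hwdef, Pi.add_apply, hu2, he'2, add_zero]
  have hww : betaB d w w = 2 + 2*c := by
    rw [hwdef, betaB_add_left, betaB_add_right, betaB_add_right, huu, ← hcdef, he'u, he'e']
    ring
  have hwwne : betaB d w w ≠ 0 := by rw [hww]; nlinarith
  -- the path of reflections
  set ws : ℝ → Vd d := fun s => s • u + (2 - s) • e' with hwsdef
  have hwsval : ∀ s : ℝ, betaB d (ws s) (ws s) = s^2 + (2-s)^2 + 2*s*(2-s)*c := by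
    intro s
    rw [hwsdef]
    simp only [betaB_add_left, betaB_add_right, betaB_smul_left, betaB_smul_right]
    rw [huu, ← hcdef, he'u, he'e']
    ring
  have hwsne : ∀ s ∈ Set.Icc (0:ℝ) 1, betaB d (ws s) (ws s) ≠ 0 := by
    intro s hs
    rw [hwsval s]
    have h1 : 0 ≤ s := hs.1
    have h2 : s ≤ 1 := hs.2
    nlinarith [mul_nonneg (mul_nonneg h1 (by linarith : (0:ℝ) ≤ 2 - s))
      (by linarith : (0:ℝ) ≤ c - 1)]
  have hwscont : ContinuousOn (fun s => reflM d (ws s)) (Set.Icc (0:ℝ) 1) := by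
    apply cont_reflM _ hwsne
    intro i
    show ContinuousOn (fun s => s * u i + (2 - s) * e' i) (Set.Icc (0:ℝ) 1)
    apply Continuous.continuousOn
    exact (continuous_id.mul continuous_const).add
      ((continuous_const.sub continuous_id).mul continuous_const)
  have hws0 : ws 0 = (2:ℝ) • e' := by
    rw [hwsdef]
    show (0:ℝ) • u + ((2:ℝ) - 0) • e' = (2:ℝ) • e'
    rw [zero_smul, sub_zero, zero_add]
  have hws1 : ws 1 = w := by
    rw [hwsdef, hwdef]
    show (1:ℝ) • u + ((2:ℝ) - 1) • e' = u + e'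
    norm_num
  have hOe' : reflM d e' ∈ Obeta d := reflM_mem_Obeta e' he'e'ne
  have hpathL : GPath d (reflM d e' * reflM d w) := by
    refine ⟨fun s => reflM d e' * reflM d (ws s), contOn_matmul continuousOn_const hwscont,
      fun s hs => mul_mem_Obeta hOe' (reflM_mem_Obeta _ (hwsne s hs)), ?_,
      by show reflM d e' * reflM d (ws 1) = _; rw [hws1]⟩
    show reflM d e' * reflM d (ws 0) = 1
    rw [hws0, reflM_smul two_ne_zero, reflM_mul_self e' he'e'ne]
  have hpathLinv : GPath d (reflM d w * reflM d e') := by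
    refine ⟨fun s => reflM d (ws s) * reflM d e', contOn_matmul hwscont continuousOn_const,
      fun s hs => mul_mem_Obeta (reflM_mem_Obeta _ (hwsne s hs)) hOe', ?_,
      by show reflM d (ws 1) * reflM d e' = _; rw [hws1]⟩
    show reflM d (ws 0) * reflM d e' = 1
    rw [hws0, reflM_smul two_ne_zero, reflM_mul_self e' he'e'ne]
  have hcommL : (reflM d e' * reflM d w) * hmat d = hmat d * (reflM d e' * reflM d w) :=
    comm_h_mul (reflM_comm_h hd e' he'1 he'2) (reflM_comm_h hd w hw1 hw2)
  have hcommLinv : (reflM d w * reflM d e') * hmat d = hmat d * (reflM d w * reflM d e') :=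
    comm_h_mul (reflM_comm_h hd w hw1 hw2) (reflM_comm_h hd e' he'1 he'2)
  have hinvol : ∀ v : Vd d,
      (reflM d w * reflM d e').mulVec ((reflM d e' * reflM d w).mulVec v) = v := by
    intro v
    rw [← Matrix.mulVec_mulVec, ← Matrix.mulVec_mulVec,
      reflM_mulVec_invol e' he'e'ne, reflM_mulVec_invol w hwwne]
  have hLu : (reflM d e' * reflM d w).mulVec u = e' := by
    rw [← Matrix.mulVec_mulVec]
    have h1 : (reflM d w).mulVec u = e' := by
      rw [reflM_mulVec]
      have hwu : betaB d w u = 1 + c := by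
        rw [hwdef, betaB_add_left, huu, he'u]
      rw [hwu, hww, show 2 * (1 + c) / (2 + 2*c) = (1:ℝ) from by
        rw [div_eq_one_iff_eq (by nlinarith)]; ring]
      rw [one_smul, hwdef, add_sub_cancel_left]
    rw [h1, reflM_mulVec, he'e', show 2 * 1 / 1 = (2:ℝ) by norm_num, two_smul,
      add_sub_cancel_right]
  refine ⟨reflM d e' * reflM d w, reflM d w * reflM d e',
    hpathL, hpathLinv, hcommL, hcommLinv, hinvol, ?_, ?_, ?_⟩
  · have hy_ru : y = r • u := by
      rw [hudef, smul_smul, mul_inv_cancel₀ (ne_of_gt hr), one_smul]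
    rw [hy_ru, Matrix.mulVec_smul, hLu, he'def, sv_smul, mul_comm]
  · intro c0
    have h1 : (reflM d w).mulVec (sv d 1 c0) = -(sv d 1 c0) :=
      reflM_neg _ _ (by rw [betaB_sv_right, hw1]; ring)
    have h2 : (reflM d e').mulVec (sv d 1 c0) = -(sv d 1 c0) :=
      reflM_neg _ _ (by rw [betaB_sv_right, he'1]; ring)
    rw [← Matrix.mulVec_mulVec, h1, Matrix.mulVec_neg, h2, neg_neg]
  · intro c0
    have h1 : (reflM d w).mulVec (sv d 2 c0) = -(sv d 2 c0) :=
      reflM_neg _ _ (by rw [betaB_sv_right, hw2]; ring)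
    have h2 : (reflM d e').mulVec (sv d 2 c0) = -(sv d 2 c0) :=
      reflM_neg _ _ (by rw [betaB_sv_right, he'2]; ring)
    rw [← Matrix.mulVec_mulVec, h1, Matrix.mulVec_neg, h2, neg_neg]

end Stmt11
namespace Stmt11

variable {d : ℕ}

lemma C_main (hd : 2 ≤ d) (x : Vd d) (hAdS : betaB d x x = 1)
    (hcone : x 1 ^ 2 < x 2 ^ 2) (hsign : 0 < x 0 * x 2) :
    (∃ g ∈ Gh d, ∃ p ∈ AdS d,
      (∀ j : Fin (d+1), (j:ℕ) ≠ 0 → (j:ℕ) ≠ 2 → p j = 0) ∧ 0 < p 0 * p 2 ∧ x = g.mulVec p)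
    ∧ posPair d x ((hmat d).mulVec x) := by
  have hx2ne : x 2 ≠ 0 := by intro h; rw [h, mul_zero] at hsign; exact lt_irrefl 0 hsign
  have hx0ne : x 0 ≠ 0 := by intro h; rw [h, zero_mul] at hsign; exact lt_irrefl 0 hsign
  obtain ⟨ε2, hε2def⟩ : ∃ t : ℝ, t = if 0 < x 2 then 1 else -1 := ⟨_, rfl⟩
  obtain ⟨ε, hεdef⟩ : ∃ t : ℝ, t = if 0 < x 0 then 1 else -1 := ⟨_, rfl⟩
  have hεone : ε = 1 ∨ ε = -1 := by rw [hεdef]; split_ifs <;> simp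
  have hε2one : ε2 = 1 ∨ ε2 = -1 := by rw [hε2def]; split_ifs <;> simp
  have hεsq : ε^2 = 1 := by rcases hεone with h | h <;> rw [h] <;> norm_num
  have hε2sq : ε2^2 = 1 := by rcases hε2one with h | h <;> rw [h] <;> norm_num
  have hε2x2 : 0 < ε2 * x 2 := by
    rw [hε2def]; split_ifs with h
    · rw [one_mul]; exact h
    · have : x 2 < 0 := lt_of_le_of_ne (not_lt.1 h) hx2ne
      nlinarith
  have hεx0 : 0 < ε * x 0 := by
    rw [hεdef]; split_ifs with h
    · rw [one_mul]; exact h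
    · have : x 0 < 0 := lt_of_le_of_ne (not_lt.1 h) hx0ne
      nlinarith
  have hee : ε = ε2 := by
    rw [hεdef, hε2def]
    by_cases h0 : 0 < x 0 <;> by_cases h2 : 0 < x 2
    · rw [if_pos h0, if_pos h2]
    · exfalso
      have hx2 : x 2 < 0 := lt_of_le_of_ne (not_lt.1 h2) hx2ne
      nlinarith
    · exfalso
      have hx0 : x 0 < 0 := lt_of_le_of_ne (not_lt.1 h0) hx0ne
      nlinarith
    · rw [if_neg h0, if_neg h2]
  obtain ⟨Δ, hΔdef⟩ : ∃ t : ℝ, t = x 2^2 - x 1^2 := ⟨_, rfl⟩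
  have hΔ : 0 < Δ := by rw [hΔdef]; linarith [hcone]
  obtain ⟨sΔ, hsΔdef⟩ : ∃ t : ℝ, t = Real.sqrt Δ := ⟨_, rfl⟩
  have hsΔ : 0 < sΔ := by rw [hsΔdef]; exact Real.sqrt_pos.2 hΔ
  have hsΔsq : sΔ^2 = Δ := by rw [hsΔdef]; exact Real.sq_sqrt (le_of_lt hΔ)
  obtain ⟨a, hadef⟩ : ∃ t : ℝ, t = ε2 * x 2 / sΔ := ⟨_, rfl⟩
  obtain ⟨b, hbdef⟩ : ∃ t : ℝ, t = -(x 1) * ε2 / sΔ := ⟨_, rfl⟩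
  have hab : a^2 - b^2 = 1 := by
    rw [hadef, hbdef]
    rw [div_pow, div_pow, div_sub_div_same, div_eq_one_iff_eq (by positivity)]
    rw [hsΔsq, hΔdef]
    linear_combination (x 2^2 - x 1^2) * hε2sq
  have ha_pos : 0 < a := by rw [hadef]; exact div_pos hε2x2 hsΔ
  -- the boost in the (1,2) plane
  obtain ⟨B, hBdef⟩ : ∃ t : Mat d, t = tb d 1 2 a b b a := ⟨_, rfl⟩
  obtain ⟨Binv, hBinvdef⟩ : ∃ t : Mat d, t = tb d 1 2 a (-b) (-b) a := ⟨_, rfl⟩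
  have hBpath : GPath d B := by
    rw [hBdef]
    have h := gpath_hyp (ne12 hd) (cf1 hd) (cf2 hd) (Real.arsinh b)
    have hsq : Real.sqrt (1 + b^2) = a := by
      rw [show 1 + b^2 = a^2 by linear_combination (-1 : ℝ) * hab]
      exact Real.sqrt_sq (le_of_lt ha_pos)
    rwa [Real.cosh_arsinh, Real.sinh_arsinh, hsq] at h
  have hBinvpath : GPath d Binv := by
    rw [hBinvdef]
    have h := gpath_hyp (ne12 hd) (cf1 hd) (cf2 hd) (-Real.arsinh b)
    have hsq : Real.sqrt (1 + b^2) = a := by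
      rw [show 1 + b^2 = a^2 by linear_combination (-1 : ℝ) * hab]
      exact Real.sqrt_sq (le_of_lt ha_pos)
    rwa [Real.cosh_neg, Real.sinh_neg, Real.cosh_arsinh, Real.sinh_arsinh, hsq] at h
  have hBinvB : Binv * B = 1 := by
    rw [hBinvdef, hBdef, tb_mul_tb (ne12 hd),
      show a*a + (-b)*b = 1 by linear_combination hab, show a*b + (-b)*a = 0 by ring,
      show (-b)*a + a*b = 0 by ring, show (-b)*b + a*a = 1 by linear_combination hab]
    exact tb_one (ne12 hd)
  have hBobeta : B ∈ Obeta d := by rw [hBdef]; exact tb_hyp_mem_Obeta (ne12 hd) (cf1 hd) (cf2 hd) hab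
  have hBcomm : B * hmat d = hmat d * B := by rw [hBdef]; exact tb12_comm_h hd a b
  have hBinvcomm : Binv * hmat d = hmat d * Binv := by rw [hBinvdef]; exact tb12_comm_h hd a (-b)
  -- the straightened vector x'
  obtain ⟨x', hx'def⟩ : ∃ t : Vd d, t = B.mulVec x := ⟨_, rfl⟩
  have hx'1 : x' 1 = 0 := by
    rw [hx'def, hBdef, tb_mulVec_p (ne12 hd), hadef, hbdef]
    field_simp
    ring
  have hx'2 : x' 2 = ε2 * sΔ := by
    rw [hx'def, hBdef, tb_mulVec_q (ne12 hd), hadef, hbdef]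
    rw [div_mul_eq_mul_div, div_mul_eq_mul_div, ← add_div,
      div_eq_iff (ne_of_gt hsΔ)]
    linear_combination (-ε2) * hsΔsq + (-ε2) * hΔdef
  have hx'0 : x' 0 = x 0 := by
    rw [hx'def, hBdef, tb_mulVec_other (ne12 hd) (ne01 hd) (ne02 hd)]
  have hx'x' : betaB d x' x' = 1 := by
    rw [hx'def, hBobeta.2 x x]
    exact hAdS
  -- remove coordinate 2
  obtain ⟨y, hydef⟩ : ∃ t : Vd d, t = fun j => if j = (2 : Fin (d+1)) then 0 else x' j := ⟨_, rfl⟩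
  have hyother : ∀ j : Fin (d+1), j ≠ 2 → y j = x' j := by
    intro j hj
    rw [hydef]
    exact if_neg hj
  have hy2 : y 2 = 0 := by rw [hydef]; exact if_pos rfl
  have hy1 : y 1 = 0 := by rw [hyother 1 (ne12 hd)]; exact hx'1
  have hy0 : y 0 = x 0 := by rw [hyother 0 (ne02 hd)]; exact hx'0
  have hx'decomp : x' = y + sv d 2 (x' 2) := by
    funext j
    rw [Pi.add_apply]
    by_cases hj : j = (2 : Fin (d+1))
    · subst hj; rw [hy2, sv_apply_self, zero_add]
    · rw [hyother j hj, sv_apply_ne _ _ hj, add_zero]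
  have hyy : betaB d y y = 1 + x' 2^2 := by
    have hexp : betaB d x' x' = betaB d y y - x' 2^2 := by
      conv_lhs => rw [hx'decomp]
      simp only [betaB_add_left, betaB_add_right, betaB_sv_left, betaB_sv_right,
        Pi.add_apply, sv_apply_self, cf2 hd, hy2]
      ring
    rw [hexp] at hx'x'
    linarith
  obtain ⟨r, hrdef⟩ : ∃ t : ℝ, t = Real.sqrt (1 + x' 2^2) := ⟨_, rfl⟩
  have hrpos : 0 < r := by rw [hrdef]; exact Real.sqrt_pos.2 (by positivity)
  have hr2 : r^2 = 1 + x' 2^2 := by rw [hrdef]; exact Real.sq_sqrt (by positivity)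
  have hyyr : betaB d y y = r^2 := by rw [hyy, hr2]
  -- r ≤ ε y₀
  have hztest : betaB d y y - y 0^2 ≤ 0 := by
    have h0 : (y - sv d 0 (y 0)) 0 = 0 := by
      rw [Pi.sub_apply, sv_apply_self, sub_self]
    have h1 : (y - sv d 0 (y 0)) 1 = 0 := by
      rw [Pi.sub_apply, sv_apply_ne _ _ (ne01 hd).symm, hy1, sub_zero]
    have hz := betaB_nonpos hd _ h0 h1
    have hexp : betaB d (y - sv d 0 (y 0)) (y - sv d 0 (y 0)) = betaB d y y - y 0^2 := by
      simp only [betaB_sub_left, betaB_sub_right, betaB_sv_left, betaB_sv_right,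
        Pi.sub_apply, sv_apply_self, sub_self, cf0 hd]
      ring
    rw [hexp] at hz
    exact hz
  have hεy0r : r ≤ ε * y 0 := by
    have hsq : r^2 ≤ (ε * y 0)^2 := by
      have : (ε * y 0)^2 = y 0^2 := by linear_combination (y 0^2) * hεsq
      rw [this, ← hyyr]
      linarith
    have h3 : 0 < ε * y 0 := by rw [hy0]; exact hεx0
    by_contra hcon
    push_neg at hcon
    have hlt : (ε * y 0)^2 < r^2 := by
      apply pow_lt_pow_left₀ hcon (le_of_lt h3)
      norm_num
    linarith
  obtain ⟨L, Linv, hLpath, hLinvpath, hLcomm, hLinvcomm, hinvol, hLy, hLsv1, hLsv2⟩ :=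
    L_setup hd y hy1 hy2 r ε hrpos hyyr hεone hεy0r
  -- the slice point p
  obtain ⟨p, hpdef⟩ : ∃ t : Vd d, t = sv d 0 (ε * r) + sv d 2 (x' 2) := ⟨_, rfl⟩
  have hLx' : L.mulVec x' = p := by
    rw [hx'decomp, Matrix.mulVec_add, hLy, hLsv2, hpdef]
  have hp0 : p 0 = ε * r := by
    rw [hpdef, Pi.add_apply, sv_apply_self, sv_apply_ne _ _ (ne02 hd), add_zero]
  have hp2 : p 2 = x' 2 := by
    rw [hpdef, Pi.add_apply, sv_apply_self, sv_apply_ne _ _ (ne02 hd).symm, zero_add]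
  have hpj : ∀ j : Fin (d+1), (j:ℕ) ≠ 0 → (j:ℕ) ≠ 2 → p j = 0 := by
    intro j hj0 hj2
    have h0 : j ≠ 0 := fun h => hj0 (by rw [h, val0])
    have h2 : j ≠ 2 := fun h => hj2 (by rw [h, val2 hd])
    rw [hpdef, Pi.add_apply, sv_apply_ne _ _ h0, sv_apply_ne _ _ h2, add_zero]
  have hpAdS : betaB d p p = 1 := by
    rw [hpdef]
    simp only [betaB_add_left, betaB_add_right, betaB_sv_left, betaB_sv_right,
      Pi.add_apply, sv_apply_self, sv_apply_ne _ _ (ne02 hd), sv_apply_ne _ _ (ne02 hd).symm,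
      cf0 hd, cf2 hd]
    linear_combination hr2 + (r^2) * hεsq
  have hpsign : 0 < p 0 * p 2 := by
    rw [hp0, hp2, hx'2, hee]
    rw [show ε2 * r * (ε2 * sΔ) = ε2^2 * (r * sΔ) by ring, hε2sq, one_mul]
    exact mul_pos hrpos hsΔ
  constructor
  · -- x is in the G^h-orbit of the slice
    refine ⟨Binv * Linv, ⟨(hBinvpath.mul hLinvpath).mem_Gset,
      comm_h_mul hBinvcomm hLinvcomm⟩, p, hpAdS, hpj, hpsign, ?_⟩
    rw [← Matrix.mulVec_mulVec, ← hLx', hinvol x', hx'def, Matrix.mulVec_mulVec, hBinvB,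
      Matrix.one_mulVec]
  · -- positivity of the pair (x, hx)
    obtain ⟨aD, haDdef⟩ : ∃ t : ℝ, t = r := ⟨_, rfl⟩
    obtain ⟨bD, hbDdef⟩ : ∃ t : ℝ, t = -(ε * x' 2) := ⟨_, rfl⟩
    have habD : aD^2 - bD^2 = 1 := by
      rw [haDdef, hbDdef]
      linear_combination hr2 - (x' 2^2) * hεsq
    obtain ⟨D, hDdef⟩ : ∃ t : Mat d, t = tb d 0 2 aD bD bD aD := ⟨_, rfl⟩
    have hDpath : GPath d D := by
      rw [hDdef]
      have h := gpath_hyp (ne02 hd) (cf0 hd) (cf2 hd) (Real.arsinh bD)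
      have hsq : Real.sqrt (1 + bD^2) = aD := by
        rw [show 1 + bD^2 = aD^2 by linear_combination (-1 : ℝ) * habD]
        exact Real.sqrt_sq (by rw [haDdef]; exact le_of_lt hrpos)
      rwa [Real.cosh_arsinh, Real.sinh_arsinh, hsq] at h
    have hDp : D.mulVec p = sv d 0 ε := by
      rw [hpdef, hDdef, tb_mulVec_combo (ne02 hd)]
      rw [show aD * (ε * r) + bD * x' 2 = ε from by rw [haDdef, hbDdef]; linear_combination ε * hr2,
        show bD * (ε * r) + aD * x' 2 = 0 from by rw [haDdef, hbDdef]; linear_combination (-(r * x' 2)) * hεsq]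
      rw [sv_zero, add_zero]
    have hDsv1 : ∀ t : ℝ, D.mulVec (sv d 1 t) = sv d 1 t := by
      intro t
      rw [hDdef]
      exact tb_mulVec_sv_other (ne02 hd) (ne01 hd).symm (ne12 hd) aD bD bD aD t
    obtain ⟨R, hRdef⟩ : ∃ t : Mat d, t = tb d 0 1 ε 0 0 ε := ⟨_, rfl⟩
    have hRpath : GPath d R := by
      rcases hεone with h | h
      · rw [hRdef, h, tb_one (ne01 hd)]
        exact gpath_one
      · have hp := gpath_rot (ne01 hd) (cf0 hd) (cf1 hd) Real.pi
        rwa [Real.cos_pi, Real.sin_pi, neg_zero, ← h, ← hRdef] at hp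
    have hRsv0 : R.mulVec (sv d 0 ε) = evec d 0 := by
      have : sv d 0 ε = sv d 0 ε + sv d 1 0 := by rw [sv_zero, add_zero]
      rw [this, hRdef, tb_mulVec_combo (ne01 hd)]
      rw [show ε * ε + 0 * 0 = 1 from by linear_combination hεsq, show 0 * ε + ε * 0 = 0 by ring,
        sv_zero, add_zero, evec_eq_sv]
    have hRsv1 : ∀ t : ℝ, R.mulVec (sv d 1 t) = sv d 1 (ε * t) := by
      intro t
      have : sv d 1 t = sv d 0 0 + sv d 1 t := by rw [sv_zero, zero_add]
      rw [this, hRdef, tb_mulVec_combo (ne01 hd)]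
      rw [show ε * 0 + 0 * t = 0 by ring, show 0 * 0 + ε * t = ε * t by ring,
        sv_zero, zero_add]
    refine ⟨((R * D) * L) * B, (((hRpath.mul hDpath).mul hLpath).mul hBpath).mem_Gset, ?_, ?_⟩
    · rw [← Matrix.mulVec_mulVec, ← Matrix.mulVec_mulVec, ← Matrix.mulVec_mulVec,
        ← hx'def, hLx', hDp, hRsv0]
    · have hBh : B.mulVec ((hmat d).mulVec x) = sv d 1 (x' 2) := by
        rw [Matrix.mulVec_mulVec, hBcomm, ← Matrix.mulVec_mulVec, ← hx'def,
          hmat_mulVec hd, hx'1, sv_zero, add_zero]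
      rw [← Matrix.mulVec_mulVec, ← Matrix.mulVec_mulVec, ← Matrix.mulVec_mulVec,
        hBh, hLsv1, hDsv1, hRsv1]
      have hval : ε * x' 2 = sΔ := by
        rw [hx'2, hee]
        linear_combination sΔ * hε2sq
      rw [hval]
      refine ⟨?_, ?_, ?_⟩
      · rw [betaB_sv_right, evec_apply_ne (ne01 hd).symm]
        ring
      · rw [betaB_sv_right, sv_apply_self, cf1 hd]
        rw [one_mul]
        exact mul_pos hsΔ hsΔ
      · rw [betaB_evec1_right hd, sv_apply_self]
        exact hsΔ

end Stmt11
open Stmt11 in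
/-- The positivity domain of the modular vector field on `AdS^d`:
`W_M⁺(h) = G^h·{x₀e₀ + x₂e₂ ∈ M : x₀x₂ > 0}`. -/
theorem stmt11 (d : ℕ) (hd : 2 ≤ d) :
    WplusDom d = {y : Vd d | ∃ g ∈ Gh d, ∃ x ∈ AdS d,
      (∀ j : Fin (d + 1), (j : ℕ) ≠ 0 → (j : ℕ) ≠ 2 → x j = 0) ∧
      0 < x 0 * x 2 ∧ y = g.mulVec x} := by
  ext y
  constructor
  · rintro ⟨hAdS, g, hg, hgx, hgv⟩
    have hO : g ∈ Obeta d := Gset_sub_Obeta hg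
    have hAdS' : betaB d y y = 1 := hAdS
    -- positivity of β on h y
    have hvv : betaB d ((hmat d).mulVec y) ((hmat d).mulVec y)
        = betaB d (g.mulVec ((hmat d).mulVec y)) (g.mulVec ((hmat d).mulVec y)) :=
      (hO.2 _ _).symm
    have hvpos : 0 < betaB d ((hmat d).mulVec y) ((hmat d).mulVec y) := by
      rw [hvv]; exact hgv.2.1
    have hcone : y 1 ^ 2 < y 2 ^ 2 := by
      have := hvpos
      rw [betaB_hz_hz hd] at this
      linarith
    -- the sign condition
    have hsign : 0 < y 0 * y 2 := by
      have hiff := sign_invariance hd y ((hmat d).mulVec y) hAdS' (betaB_z_hz hd y) hvpos hg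
      rw [hgx, Jfun_evec0 hd] at hiff
      have h1 : 0 < betaB d (g.mulVec ((hmat d).mulVec y)) (evec d 1) := hgv.2.2
      have h2 := hiff.1 h1
      rwa [betaB_hz_Jz hd] at h2
    exact (C_main hd y hAdS' hcone hsign).1
  · rintro ⟨g, ⟨hgG, hgc⟩, p, hpAdS, hsupp, hs, rfl⟩
    have hO : g ∈ Obeta d := Gset_sub_Obeta hgG
    have hpp : betaB d p p = 1 := hpAdS
    have hyAdS : betaB d (g.mulVec p) (g.mulVec p) = 1 := by rw [hO.2]; exact hpp
    have hp1 : p 1 = 0 := by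
      apply hsupp 1 <;> rw [val1 hd] <;> omega
    have hp2ne : p 2 ≠ 0 := by
      intro h; rw [h, mul_zero] at hs; exact lt_irrefl 0 hs
    have hhp_pos : 0 < betaB d ((hmat d).mulVec p) ((hmat d).mulVec p) := by
      rw [betaB_hz_hz hd, hp1]
      have := pow_two_pos_of_ne_zero hp2ne
      linarith
    -- transport h along g
    have hy_h : (hmat d).mulVec (g.mulVec p) = g.mulVec ((hmat d).mulVec p) := by
      rw [Matrix.mulVec_mulVec, ← hgc, ← Matrix.mulVec_mulVec]
    -- cone condition for y = g p
    have hcone : (g.mulVec p) 1 ^ 2 < (g.mulVec p) 2 ^ 2 := by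
      have h1 : betaB d ((hmat d).mulVec (g.mulVec p)) ((hmat d).mulVec (g.mulVec p))
          = betaB d ((hmat d).mulVec p) ((hmat d).mulVec p) := by
        rw [hy_h, hO.2]
      have h2 := hhp_pos
      rw [← h1, betaB_hz_hz hd] at h2
      linarith
    -- sign condition for y = g p
    have hsign : 0 < (g.mulVec p) 0 * (g.mulVec p) 2 := by
      have hiff := sign_invariance hd p ((hmat d).mulVec p) hpp (betaB_z_hz hd p) hhp_pos hgG
      have hrhs : 0 < betaB d ((hmat d).mulVec p) (Jfun d p) := by
        rw [betaB_hz_Jz hd]; exact hs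
      have hlhs := hiff.2 hrhs
      rw [← hy_h, betaB_hz_Jz hd] at hlhs
      exact hlhs
    exact ⟨hyAdS, (C_main hd (g.mulVec p) hyAdS hcone hsign).2⟩
end
end
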